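/- arXiv:math/0504360 — 3 statements merged into one kernel-verified Lean document; each statement's English description precedes it below -/
import Mathlib

section
/- Fix n ≥ 2 and a primitive n-th root of unity ζ ∈ ℂ, and let the cyclic group C_n ≅ ℤ/nℤ act on ℂ[a,b,c] with a chosen generator acting by a ↦ ζa, b ↦ ζ⁻¹b, c ↦ c. An ideal J ⊆ ⟨a,b,c⟩ of ℂ[a,b,c] is a C_n-cluster if and only if there exist an integer k with 1 ≤ k ≤ n−1 and (s,t) ∈ ℂ² with (s,t) ≠ (0,0) such that J = ⟨s·a^k − t·b^{n−k}, c, a^{k+1}, b^{n−k+1}, ab⟩. -/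
open MvPolynomial

/-- The generator of the cyclic group action on `ℂ[a,b,c]`: `a ↦ ζa`, `b ↦ ζ⁻¹b`,
`c ↦ c`. -/
noncomputable def cycAct3 (ζ : ℂ) :
    MvPolynomial (Fin 3) ℂ →ₐ[ℂ] MvPolynomial (Fin 3) ℂ :=
  aeval ![C ζ * X 0, C ζ⁻¹ * X 1, X 2]

noncomputable section Stmt17AuxSection

namespace Stmt17Aux

open Finset

variable (n : ℕ) (ζ : ℂ)

/-- The character `x ↦ ζ^x` on `ZMod n`. -/
def chi (x : ZMod n) : ℂ := ζ ^ x.val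

lemma pow_mod (h1 : ζ ^ n = 1) (i : ℕ) : ζ ^ i = ζ ^ (i % n) := by
  conv_lhs => rw [← Nat.div_add_mod i n]
  rw [pow_add, pow_mul, h1, one_pow, one_mul]

lemma chi_natCast (h1 : ζ ^ n = 1) (i : ℕ) : chi n ζ (i : ZMod n) = ζ ^ i := by
  rw [chi, ZMod.val_natCast, ← pow_mod n ζ h1]

lemma chi_add [NeZero n] (h1 : ζ ^ n = 1) (x y : ZMod n) :
    chi n ζ (x + y) = chi n ζ x * chi n ζ y := by
  have hx : ((x.val : ZMod n)) = x := ZMod.natCast_rightInverse x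
  have hy : ((y.val : ZMod n)) = y := ZMod.natCast_rightInverse y
  rw [← hx, ← hy, ← Nat.cast_add, chi_natCast n ζ h1, chi_natCast n ζ h1,
    chi_natCast n ζ h1, pow_add]

lemma chi_zero [NeZero n] : chi n ζ 0 = 1 := by simp [chi]

lemma chi_mul_natCast [NeZero n] (h1 : ζ ^ n = 1) (c : ZMod n) (j : ℕ) :
    chi n ζ (c * (j : ZMod n)) = chi n ζ c ^ j := by
  induction j with
  | zero => simp [chi_zero]
  | succ j ih =>
      push_cast
      rw [mul_add, mul_one, chi_add n ζ h1, ih, pow_succ]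

lemma sum_zmod [NeZero n] (f : ZMod n → ℂ) :
    ∑ m : ZMod n, f m = ∑ j ∈ range n, f (j : ZMod n) := by
  rw [← Fin.sum_univ_eq_sum_range (fun j => f (j : ZMod n)) n]
  apply Fintype.sum_bijective (fun m : ZMod n => (Fin.mk m.val (ZMod.val_lt m)))
  · constructor
    · intro x y hxy
      exact ZMod.val_injective n (congrArg Fin.val hxy)
    · intro j
      refine ⟨((j : ℕ) : ZMod n), ?_⟩
      ext
      simp [ZMod.val_natCast, Nat.mod_eq_of_lt j.isLt]
  · intro m
    simp only []
    congr 1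
    exact (ZMod.natCast_rightInverse m).symm

lemma sum_chi [NeZero n] (hζ : IsPrimitiveRoot ζ n) (c : ZMod n) :
    ∑ m : ZMod n, chi n ζ (c * m) = if c = 0 then (n : ℂ) else 0 := by
  have h1 : ζ ^ n = 1 := hζ.pow_eq_one
  rw [sum_zmod]
  by_cases hc : c = 0
  · simp [hc, chi_zero]
  · simp only [hc, if_false]
    have hne : chi n ζ c ≠ 1 := by
      intro h
      rw [chi] at h
      have hv : n ∣ c.val := (hζ.pow_eq_one_iff_dvd c.val).mp h
      have hlt : c.val < n := ZMod.val_lt c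
      have hpos : 0 < c.val := Nat.pos_of_ne_zero (fun h0 => hc (by
        have := ZMod.natCast_rightInverse (n := n) c
        rw [← this, h0, Nat.cast_zero]))
      exact absurd (Nat.le_of_dvd hpos hv) (by omega)
    have hcn : chi n ζ c ^ n = 1 := by
      rw [chi, ← pow_mul, mul_comm, pow_mul, h1, one_pow]
    calc ∑ j ∈ range n, chi n ζ (c * (j:ZMod n)) = ∑ j ∈ range n, chi n ζ c ^ j := by
          exact Finset.sum_congr rfl (fun j _ => chi_mul_natCast n ζ h1 c j)
      _ = 0 := by rw [geom_sum_eq hne, hcn, sub_self, zero_div]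

/-- The group algebra as plain type. -/
abbrev Amod (n : ℕ) := AddMonoidAlgebra ℂ (ZMod n)

instance amCoeFun : CoeFun (Amod n) (fun _ => ZMod n → ℂ) := ⟨fun f => f.coeff⟩

lemma smul_apply' (c : ℂ) (f : Amod n) (y : ZMod n) : (c • f) y = c * f y := rfl

lemma shift_apply (f : Amod n) (y : ZMod n) :
    (AddMonoidAlgebra.single (1 : ZMod n) (1 : ℂ) * f) y = f (y - 1) := by
  rw [AddMonoidAlgebra.coeff_single_mul_apply]
  rw [one_mul, neg_add_eq_sub]

lemma eig_const (f : Amod n) (c : ℂ) (h : AddMonoidAlgebra.single (1 : ZMod n) (1:ℂ) * f = c • f)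
    (j : ℕ) : c ^ j * f (j : ZMod n) = f 0 := by
  induction j with
  | zero => simp
  | succ j ih =>
      have h2 : f ((j:ZMod n) + 1 - 1) = c * f ((j : ZMod n) + 1) := by
        rw [← shift_apply, h, smul_apply']
      rw [pow_succ]
      push_cast
      rw [mul_assoc, ← h2]
      simpa using ih

lemma eig_eq_zero [NeZero n] (f : Amod n) (c : ℂ) (hc : c ≠ 0)
    (h : AddMonoidAlgebra.single (1 : ZMod n) (1:ℂ) * f = c • f) (h0 : f 0 = 0) : f = 0 := by
  ext y
  have hy : ((y.val : ZMod n)) = y := ZMod.natCast_rightInverse y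
  have h2 := eig_const n f c h y.val
  rw [hy, h0] at h2
  have := mul_eq_zero.mp h2
  simpa [pow_ne_zero _ hc] using this.resolve_left (pow_ne_zero _ hc)

lemma eig_pair [NeZero n] (f g : Amod n) (c : ℂ) (hc : c ≠ 0)
    (hf : AddMonoidAlgebra.single (1 : ZMod n) (1:ℂ) * f = c • f)
    (hg : AddMonoidAlgebra.single (1 : ZMod n) (1:ℂ) * g = c • g) :
    g 0 • f = f 0 • g := by
  ext y
  have hy : ((y.val : ZMod n)) = y := ZMod.natCast_rightInverse y
  have h2 := eig_const n f c hf y.val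
  have h3 := eig_const n g c hg y.val
  rw [hy] at h2 h3
  have hcp : (c : ℂ) ^ y.val ≠ 0 := pow_ne_zero _ hc
  rw [smul_apply', smul_apply']
  apply mul_left_cancel₀ hcp
  calc c ^ y.val * (g 0 * f y) = g 0 * (c ^ y.val * f y) := by ring
    _ = g 0 * f 0 := by rw [h2]
    _ = f 0 * (c ^ y.val * g y) := by rw [h3]; ring
    _ = c ^ y.val * (f 0 * g y) := by ring

/-- DFT basis vector. -/
def wv [NeZero n] (d : ZMod n) : Amod n :=
  ∑ m : ZMod n, AddMonoidAlgebra.single m (chi n ζ (-(d * m)))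

lemma wv_apply [NeZero n] (d y : ZMod n) : wv n ζ d y = chi n ζ (-(d * y)) := by
  rw [wv, AddMonoidAlgebra.coeff_sum, Finsupp.finset_sum_apply, Finset.sum_eq_single y]
  · simp [AddMonoidAlgebra.coeff_single_apply]
  · intro m _ hm; simp [AddMonoidAlgebra.coeff_single_apply, hm]
  · simp

lemma shift_wv [NeZero n] (h1 : ζ ^ n = 1) (d : ZMod n) :
    AddMonoidAlgebra.single (1 : ZMod n) (1:ℂ) * wv n ζ d = chi n ζ d • wv n ζ d := by
  ext y
  rw [shift_apply, wv_apply, smul_apply', wv_apply, ← chi_add n ζ h1]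
  congr 1
  ring

instance [NeZero n] : FiniteDimensional ℂ (Amod n) :=
  Module.Finite.of_basis (AddMonoidAlgebra.basis (ZMod n) ℂ)

/-- The DFT as linear map. -/
def Dmap [NeZero n] : Amod n →ₗ[ℂ] Amod n :=
  (AddMonoidAlgebra.basis (ZMod n) ℂ).constr ℂ (wv n ζ)

lemma Dmap_single [NeZero n] (d : ZMod n) (c : ℂ) :
    Dmap n ζ (AddMonoidAlgebra.single d c) = c • wv n ζ d := by
  have hb : AddMonoidAlgebra.single d c
      = c • (AddMonoidAlgebra.basis (ZMod n) ℂ) d := by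
    rw [AddMonoidAlgebra.basis_apply, AddMonoidAlgebra.smul_single, smul_eq_mul, mul_one]
  rw [hb, map_smul]
  congr 1
  exact Module.Basis.constr_basis _ _ _ _

lemma Dmap_apply_eval [NeZero n] (f : Amod n) (y : ZMod n) :
    Dmap n ζ f y = ∑ d : ZMod n, f d * chi n ζ (-(d * y)) := by
  conv_lhs => rw [← AddMonoidAlgebra.sum_coeff_single f, Finsupp.sum]
  rw [map_sum, AddMonoidAlgebra.coeff_sum, Finsupp.finset_sum_apply]
  rw [Finset.sum_subset (Finset.subset_univ f.coeff.support)]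
  · exact Finset.sum_congr rfl fun d _ => by rw [Dmap_single, smul_apply', wv_apply]
  · intro d _ hd
    have h0 : f d = 0 := Finsupp.notMem_support_iff.mp hd
    rw [Dmap_single, h0, zero_smul]
    rfl

lemma Dmap_injective [NeZero n] (hζ : IsPrimitiveRoot ζ n) :
    Function.Injective (Dmap n ζ) := by
  have h1 : ζ ^ n = 1 := hζ.pow_eq_one
  rw [injective_iff_map_eq_zero]
  intro f hf
  ext e
  have key : ∀ y : ZMod n, ∑ d : ZMod n, f d * chi n ζ (-(d * y)) = 0 := by
    intro y
    rw [← Dmap_apply_eval, hf]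
    rfl
  have h2 : ∀ y : ZMod n, ∑ d : ZMod n, f d * chi n ζ ((e - d) * y) = 0 := by
    intro y
    calc ∑ d : ZMod n, f d * chi n ζ ((e - d) * y)
        = ∑ d : ZMod n, chi n ζ (e * y) * (f d * chi n ζ (-(d * y))) := by
          refine Finset.sum_congr rfl fun d _ => ?_
          have h4 : (e - d) * y = e * y + -(d * y) := by ring
          rw [h4, chi_add n ζ h1]
          ring
      _ = chi n ζ (e * y) * ∑ d : ZMod n, f d * chi n ζ (-(d * y)) := by
          rw [Finset.mul_sum]
      _ = 0 := by rw [key y, mul_zero]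
  have h3 : ∑ d : ZMod n, f d * (∑ y : ZMod n, chi n ζ ((e - d) * y)) = 0 := by
    calc ∑ d : ZMod n, f d * (∑ y : ZMod n, chi n ζ ((e - d) * y))
        = ∑ d : ZMod n, ∑ y : ZMod n, f d * chi n ζ ((e - d) * y) := by
          exact Finset.sum_congr rfl fun d _ => Finset.mul_sum _ _ _
      _ = ∑ y : ZMod n, ∑ d : ZMod n, f d * chi n ζ ((e - d) * y) := Finset.sum_comm
      _ = 0 := by simp [h2]
  have h4 : f e * (n : ℂ) = 0 := by
    rw [← h3]
    symm
    calc ∑ d : ZMod n, f d * (∑ y : ZMod n, chi n ζ ((e - d) * y))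
        = ∑ d : ZMod n, f d * (if e - d = 0 then (n:ℂ) else 0) := by
          exact Finset.sum_congr rfl fun d _ => by rw [sum_chi n ζ hζ]
      _ = ∑ d : ZMod n, (if d = e then f d * (n:ℂ) else 0) := by
          refine Finset.sum_congr rfl fun d _ => ?_
          by_cases hd : d = e <;> simp [hd, sub_eq_zero, mul_ite]
          exact fun h => absurd h.symm hd
      _ = f e * (n : ℂ) := by rw [Finset.sum_ite_eq' univ e (fun d => f d * n)]; simp
  have hn0 : (n : ℂ) ≠ 0 := Nat.cast_ne_zero.mpr (NeZero.ne n)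
  have := mul_eq_zero.mp h4
  simpa [hn0] using this.resolve_right hn0

/-- The DFT as linear equivalence. -/
def Dequiv [NeZero n] (hζ : IsPrimitiveRoot ζ n) : Amod n ≃ₗ[ℂ] Amod n :=
  LinearEquiv.ofBijective (Dmap n ζ)
    ⟨Dmap_injective n ζ hζ, (LinearMap.injective_iff_surjective).mp (Dmap_injective n ζ hζ)⟩

lemma Dequiv_apply [NeZero n] (hζ : IsPrimitiveRoot ζ n) (f : Amod n) :
    Dequiv n ζ hζ f = Dmap n ζ f := rfl


abbrev Rpoly := MvPolynomial (Fin 3) ℂ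

variable (kk : ℕ) (s t : ℂ)

def genSet (n kk : ℕ) (s t : ℂ) : Set Rpoly :=
  {C s * X 0 ^ kk - C t * X 1 ^ (n - kk), X 2, X 0 ^ (kk + 1), X 1 ^ (n - kk + 1), X 0 * X 1}

def coefF (n kk : ℕ) (s t : ℂ) (i j l : ℕ) : ℂ :=
  if l ≠ 0 then 0
  else if i ≠ 0 ∧ j ≠ 0 then 0
  else if j = 0 then (if i < kk then 1 else if i = kk then t else 0)
  else if j < n - kk then 1 else if j = n - kk then s else 0

def Vm [NeZero n] (m : Fin 3 →₀ ℕ) : Amod n :=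
  AddMonoidAlgebra.single (((m 0 : ℕ) : ZMod n) - ((m 1 : ℕ) : ZMod n))
    (coefF n kk s t (m 0) (m 1) (m 2))

def Phi [NeZero n] : Rpoly →ₗ[ℂ] Amod n :=
  (basisMonomials (Fin 3) ℂ).constr ℂ (Vm n kk s t)

lemma basisMonomials_apply (m : Fin 3 →₀ ℕ) :
    (basisMonomials (Fin 3) ℂ) m = monomial m (1 : ℂ) := by
  rw [coe_basisMonomials]

lemma Phi_monomial [NeZero n] (m : Fin 3 →₀ ℕ) (r : ℂ) :
    Phi n kk s t (monomial m r) = r • Vm n kk s t m := by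
  have h : monomial m r = r • (basisMonomials (Fin 3) ℂ) m := by
    rw [basisMonomials_apply, smul_monomial, smul_eq_mul, mul_one]
  rw [h, map_smul, Phi, Module.Basis.constr_basis]

lemma X_pow_mono (i : Fin 3) (e : ℕ) : (X i : Rpoly) ^ e = monomial (Finsupp.single i e) 1 :=
  X_pow_eq_monomial

lemma mono_addsingle0 (m : Fin 3 →₀ ℕ) (a : ℕ) :
    ((m + Finsupp.single (0 : Fin 3) a) 0 = m 0 + a)
    ∧ ((m + Finsupp.single (0 : Fin 3) a) 1 = m 1)
    ∧ ((m + Finsupp.single (0 : Fin 3) a) 2 = m 2) := by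
  refine ⟨?_, ?_, ?_⟩ <;>
    simp [Finsupp.add_apply, Finsupp.single_apply, Fin.ext_iff]

lemma mono_addsingle1 (m : Fin 3 →₀ ℕ) (a : ℕ) :
    ((m + Finsupp.single (1 : Fin 3) a) 0 = m 0)
    ∧ ((m + Finsupp.single (1 : Fin 3) a) 1 = m 1 + a)
    ∧ ((m + Finsupp.single (1 : Fin 3) a) 2 = m 2) := by
  refine ⟨?_, ?_, ?_⟩ <;>
    simp [Finsupp.add_apply, Finsupp.single_apply, Fin.ext_iff]

lemma mono_addsingle2 (m : Fin 3 →₀ ℕ) (a : ℕ) :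
    ((m + Finsupp.single (2 : Fin 3) a) 0 = m 0)
    ∧ ((m + Finsupp.single (2 : Fin 3) a) 1 = m 1)
    ∧ ((m + Finsupp.single (2 : Fin 3) a) 2 = m 2 + a) := by
  refine ⟨?_, ?_, ?_⟩ <;>
    simp [Finsupp.add_apply, Finsupp.single_apply, Fin.ext_iff]

lemma Vm_eq_zero [NeZero n] (m : Fin 3 →₀ ℕ) (h : coefF n kk s t (m 0) (m 1) (m 2) = 0) :
    Vm n kk s t m = 0 := by
  rw [Vm, h]
  exact AddMonoidAlgebra.single_zero _

lemma neg_cast_eq (hkn : kk ≤ n) : (-(((n - kk : ℕ)) : ZMod n) : ZMod n) = (kk : ZMod n) := by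
  have h : ((n - kk : ℕ) : ZMod n) + (kk : ZMod n) = 0 := by
    rw [← Nat.cast_add, Nat.sub_add_cancel hkn, ZMod.natCast_self]
  exact neg_eq_of_add_eq_zero_right h

lemma Phi_mono_mul_gen [NeZero n] (hn : 2 ≤ n) (hk1 : 1 ≤ kk) (hk2 : kk ≤ n - 1)
    (g : Rpoly) (hg : g ∈ genSet n kk s t) (m : Fin 3 →₀ ℕ) :
    Phi n kk s t (monomial m 1 * g) = 0 := by
  have hkn : kk ≤ n := le_trans hk2 (Nat.sub_le n 1)
  have hnk1 : 1 ≤ n - kk := by omega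
  rcases hg with hg | hg | hg | hg | hg
  · -- relation generator
    subst hg
    have e1 : monomial m (1:ℂ) * (C s * X 0 ^ kk) = monomial (m + Finsupp.single 0 kk) s := by
      rw [X_pow_mono, C_mul_monomial, monomial_mul, one_mul, mul_one]
    have e2 : monomial m (1:ℂ) * (C t * X 1 ^ (n - kk)) =
        monomial (m + Finsupp.single 1 (n - kk)) t := by
      rw [X_pow_mono, C_mul_monomial, monomial_mul, one_mul, mul_one]
    rw [mul_sub, e1, e2, map_sub, Phi_monomial, Phi_monomial]
    obtain ⟨ha0, ha1, ha2⟩ := mono_addsingle0 m kk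
    obtain ⟨hb0, hb1, hb2⟩ := mono_addsingle1 m (n - kk)
    by_cases hl : m 2 ≠ 0
    · rw [Vm_eq_zero, Vm_eq_zero, smul_zero, smul_zero, sub_zero]
      · rw [hb2]; unfold coefF; rw [if_pos hl]
      · rw [ha2]; unfold coefF; rw [if_pos hl]
    push_neg at hl
    by_cases hi : m 0 ≠ 0
    · rw [Vm_eq_zero, Vm_eq_zero, smul_zero, smul_zero, sub_zero]
      · rw [hb0, hb1, hb2]; unfold coefF
        split_ifs <;> first | rfl | (exfalso; omega)
      · rw [ha0, ha1, ha2]; unfold coefF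
        split_ifs <;> first | rfl | (exfalso; omega)
    push_neg at hi
    by_cases hj : m 1 ≠ 0
    · rw [Vm_eq_zero, Vm_eq_zero, smul_zero, smul_zero, sub_zero]
      · rw [hb0, hb1, hb2]; unfold coefF
        split_ifs <;> first | rfl | (exfalso; omega)
      · rw [ha0, ha1, ha2]; unfold coefF
        split_ifs <;> first | rfl | (exfalso; omega)
    push_neg at hj
    -- main case: m = 0
    rw [Vm, Vm, ha0, ha1, ha2, hb0, hb1, hb2, hi, hj, hl]
    have hc1 : coefF n kk s t (0 + kk) 0 0 = t := by
      unfold coefF; split_ifs <;> first | rfl | (exfalso; omega)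
    have hc2 : coefF n kk s t 0 (0 + (n - kk)) 0 = s := by
      unfold coefF; split_ifs <;> first | rfl | (exfalso; omega)
    rw [hc1, hc2]
    have hd : (((0 + kk : ℕ) : ZMod n) - ((0:ℕ) : ZMod n))
        = (((0:ℕ) : ZMod n) - ((0 + (n - kk) : ℕ) : ZMod n)) := by
      push_cast
      rw [zero_add, zero_add, sub_zero, zero_sub, neg_cast_eq n kk hkn]
    rw [hd]
    rw [AddMonoidAlgebra.smul_single, AddMonoidAlgebra.smul_single]
    rw [smul_eq_mul, smul_eq_mul, mul_comm]
    exact sub_self _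
  · -- X 2
    subst hg
    rw [show (X 2 : Rpoly) = X 2 ^ 1 from (pow_one _).symm, X_pow_mono, monomial_mul, mul_one,
      Phi_monomial, one_smul]
    apply Vm_eq_zero
    obtain ⟨h0, h1, h2⟩ := mono_addsingle2 m 1
    rw [h0, h1, h2]
    unfold coefF
    split_ifs <;> first | rfl | (exfalso; omega)
  · -- X 0 ^ (kk+1)
    subst hg
    rw [X_pow_mono, monomial_mul, mul_one, Phi_monomial, one_smul]
    apply Vm_eq_zero
    obtain ⟨h0, h1, h2⟩ := mono_addsingle0 m (kk + 1)
    rw [h0, h1, h2]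
    unfold coefF
    split_ifs <;> first | rfl | (exfalso; omega)
  · -- X 1 ^ (n-kk+1)
    subst hg
    rw [X_pow_mono, monomial_mul, mul_one, Phi_monomial, one_smul]
    apply Vm_eq_zero
    obtain ⟨h0, h1, h2⟩ := mono_addsingle1 m (n - kk + 1)
    rw [h0, h1, h2]
    unfold coefF
    split_ifs <;> first | rfl | (exfalso; omega)
  · -- X 0 * X 1
    rw [Set.mem_singleton_iff] at hg
    subst hg
    have e1 : monomial m (1:ℂ) * (X 0 * X 1)
        = monomial ((m + Finsupp.single (0 : Fin 3) 1) + Finsupp.single (1 : Fin 3) 1) 1 := by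
      rw [show (X 0 : Rpoly) = X 0 ^ 1 from (pow_one _).symm,
        show (X 1 : Rpoly) = X 1 ^ 1 from (pow_one _).symm, X_pow_mono, X_pow_mono,
        ← mul_assoc, monomial_mul, monomial_mul, mul_one, mul_one]
    rw [e1, Phi_monomial, one_smul]
    apply Vm_eq_zero
    obtain ⟨ha0, ha1, ha2⟩ := mono_addsingle0 m 1
    obtain ⟨hb0, hb1, hb2⟩ := mono_addsingle1 (m + Finsupp.single (0 : Fin 3) 1) 1
    rw [hb0, hb1, hb2, ha0, ha1, ha2]
    unfold coefF
    split_ifs <;> first | rfl | (exfalso; omega)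


lemma single_vals0 (a : ℕ) : ((Finsupp.single (0 : Fin 3) a) 0 = a)
    ∧ ((Finsupp.single (0 : Fin 3) a) 1 = 0) ∧ ((Finsupp.single (0 : Fin 3) a) 2 = 0) := by
  refine ⟨?_, ?_, ?_⟩ <;> simp [Finsupp.single_apply, Fin.ext_iff]

lemma single_vals1 (a : ℕ) : ((Finsupp.single (1 : Fin 3) a) 0 = 0)
    ∧ ((Finsupp.single (1 : Fin 3) a) 1 = a) ∧ ((Finsupp.single (1 : Fin 3) a) 2 = 0) := by
  refine ⟨?_, ?_, ?_⟩ <;> simp [Finsupp.single_apply, Fin.ext_iff]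

lemma Phi_X0_pow [NeZero n] (i : ℕ) :
    Phi n kk s t (X 0 ^ i) = AddMonoidAlgebra.single ((i : ZMod n)) (coefF n kk s t i 0 0) := by
  obtain ⟨h0, h1, h2⟩ := single_vals0 i
  rw [X_pow_mono, Phi_monomial, one_smul, Vm, h0, h1, h2]
  rw [Nat.cast_zero, sub_zero]

lemma Phi_X1_pow [NeZero n] (j : ℕ) :
    Phi n kk s t (X 1 ^ j) = AddMonoidAlgebra.single (-(j : ZMod n)) (coefF n kk s t 0 j 0) := by
  obtain ⟨h0, h1, h2⟩ := single_vals1 j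
  rw [X_pow_mono, Phi_monomial, one_smul, Vm, h0, h1, h2]
  rw [Nat.cast_zero, zero_sub]

def uRep (n kk : ℕ) (s t : ℂ) (d : ZMod n) : Rpoly :=
  if d.val < kk then X 0 ^ d.val
  else if d.val = kk then (if t ≠ 0 then C t⁻¹ * X 0 ^ kk else C s⁻¹ * X 1 ^ (n - kk))
  else X 1 ^ (n - d.val)

def psiR [NeZero n] : Amod n →ₗ[ℂ] Rpoly :=
  (AddMonoidAlgebra.basis (ZMod n) ℂ).constr ℂ (uRep n kk s t)

lemma psiR_single [NeZero n] (d : ZMod n) (c : ℂ) :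
    psiR n kk s t (AddMonoidAlgebra.single d c) = c • uRep n kk s t d := by
  have hb : AddMonoidAlgebra.single d c
      = c • (AddMonoidAlgebra.basis (ZMod n) ℂ) d := by
    rw [AddMonoidAlgebra.basis_apply, AddMonoidAlgebra.smul_single, smul_eq_mul, mul_one]
  rw [hb, map_smul]
  congr 1
  exact Module.Basis.constr_basis _ _ _ _

lemma val_natCast_of_lt [NeZero n] {i : ℕ} (h : i < n) : ((i : ZMod n)).val = i := by
  rw [ZMod.val_natCast, Nat.mod_eq_of_lt h]

lemma Phi_uRep [NeZero n] (hn : 2 ≤ n) (hk1 : 1 ≤ kk) (hk2 : kk ≤ n - 1)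
    (hst : ¬(s = 0 ∧ t = 0)) (d : ZMod n) :
    Phi n kk s t (uRep n kk s t d) = AddMonoidAlgebra.single d (1 : ℂ) := by
  have hkn : kk ≤ n := by omega
  have hdv : d.val < n := ZMod.val_lt d
  have hcast : ((d.val : ℕ) : ZMod n) = d := ZMod.natCast_rightInverse d
  rw [uRep]
  split_ifs with h1 h2 h3
  · rw [Phi_X0_pow, hcast]
    congr 1
    unfold coefF
    split_ifs <;> first | rfl | (exfalso; omega)
  · -- d.val = kk, t ≠ 0
    rw [X_pow_mono, C_mul_monomial, mul_one, Phi_monomial, Vm]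
    obtain ⟨h0, h1', h2'⟩ := single_vals0 kk
    rw [h0, h1', h2', Nat.cast_zero, sub_zero]
    have hc : coefF n kk s t kk 0 0 = t := by
      unfold coefF; split_ifs <;> first | rfl | (exfalso; omega)
    rw [hc, AddMonoidAlgebra.smul_single, smul_eq_mul, inv_mul_cancel₀ h3, ← h2, hcast]
  · -- d.val = kk, t = 0, so s ≠ 0
    have hs : s ≠ 0 := by tauto
    rw [X_pow_mono, C_mul_monomial, mul_one, Phi_monomial, Vm]
    obtain ⟨h0, h1', h2'⟩ := single_vals1 (n - kk)
    rw [h0, h1', h2', Nat.cast_zero, zero_sub]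
    have hc : coefF n kk s t 0 (n - kk) 0 = s := by
      unfold coefF; split_ifs <;> first | rfl | (exfalso; omega)
    rw [hc, AddMonoidAlgebra.smul_single, smul_eq_mul, inv_mul_cancel₀ hs, neg_cast_eq n kk hkn,
      ← h2, hcast]
  · -- kk < d.val
    have hgt : kk < d.val := by omega
    rw [Phi_X1_pow]
    have hnd : (-(((n - d.val : ℕ)) : ZMod n) : ZMod n) = ((d.val : ℕ) : ZMod n) :=
      neg_cast_eq n d.val (le_of_lt hdv)
    have hc : coefF n kk s t 0 (n - d.val) 0 = 1 := by
      unfold coefF; split_ifs <;> first | rfl | (exfalso; omega)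
    rw [hc]
    have : (-(((n - d.val : ℕ)) : ZMod n) : ZMod n) = d := by rw [hnd, hcast]
    rw [this]

lemma mono3 (m : Fin 3 →₀ ℕ) :
    monomial m (1 : ℂ) = X 0 ^ m 0 * X 1 ^ m 1 * X 2 ^ m 2 := by
  rw [monomial_eq, C_1, one_mul, Finsupp.prod_fintype _ _ (fun i => pow_zero _),
    Fin.prod_univ_three]

lemma m_eq_single0 (m : Fin 3 →₀ ℕ) (hj : m 1 = 0) (hl : m 2 = 0) :
    m = Finsupp.single (0 : Fin 3) (m 0) := by
  ext i
  fin_cases i <;> simp [Finsupp.single_apply, Fin.ext_iff] <;> assumption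

lemma m_eq_single1 (m : Fin 3 →₀ ℕ) (hi : m 0 = 0) (hl : m 2 = 0) :
    m = Finsupp.single (1 : Fin 3) (m 1) := by
  ext i
  fin_cases i <;> simp [Finsupp.single_apply, Fin.ext_iff] <;> assumption


-- membership helpers
lemma gen_mem1 : C s * X 0 ^ kk - C t * X 1 ^ (n - kk) ∈ Ideal.span (genSet n kk s t) :=
  Ideal.subset_span (by left; rfl)
lemma gen_mem2 : (X 2 : Rpoly) ∈ Ideal.span (genSet n kk s t) :=
  Ideal.subset_span (by right; left; rfl)
lemma gen_mem3 : (X 0 : Rpoly) ^ (kk + 1) ∈ Ideal.span (genSet n kk s t) :=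
  Ideal.subset_span (by right; right; left; rfl)
lemma gen_mem4 : (X 1 : Rpoly) ^ (n - kk + 1) ∈ Ideal.span (genSet n kk s t) :=
  Ideal.subset_span (by right; right; right; left; rfl)
lemma gen_mem5 : (X 0 * X 1 : Rpoly) ∈ Ideal.span (genSet n kk s t) :=
  Ideal.subset_span (by right; right; right; right; rfl)

lemma X0_pow_mem (i : ℕ) (h : kk + 1 ≤ i) : (X 0 : Rpoly) ^ i ∈ Ideal.span (genSet n kk s t) := by
  have : (X 0 : Rpoly) ^ i = X 0 ^ (i - (kk+1)) * X 0 ^ (kk + 1) := by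
    rw [← pow_add]; congr 1; omega
  rw [this]
  exact Ideal.mul_mem_left _ _ (gen_mem3 n kk s t)

lemma X1_pow_mem (j : ℕ) (h : n - kk + 1 ≤ j) :
    (X 1 : Rpoly) ^ j ∈ Ideal.span (genSet n kk s t) := by
  have : (X 1 : Rpoly) ^ j = X 1 ^ (j - (n - kk + 1)) * X 1 ^ (n - kk + 1) := by
    rw [← pow_add]; congr 1; omega
  rw [this]
  exact Ideal.mul_mem_left _ _ (gen_mem4 n kk s t)

lemma mono_mem_c (m : Fin 3 →₀ ℕ) (hl : m 2 ≠ 0) :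
    monomial m (1:ℂ) ∈ Ideal.span (genSet n kk s t) := by
  have h : monomial m (1:ℂ) = (X 0 ^ m 0 * X 1 ^ m 1 * X 2 ^ (m 2 - 1)) * X 2 := by
    rw [mono3, show (X 2 : Rpoly) ^ m 2 = X 2 ^ (m 2 - 1) * X 2 by
      rw [← pow_succ]; congr 1; omega]
    ring
  rw [h]
  exact Ideal.mul_mem_left _ _ (gen_mem2 n kk s t)

lemma mono_mem_ab (m : Fin 3 →₀ ℕ) (hi : m 0 ≠ 0) (hj : m 1 ≠ 0) :
    monomial m (1:ℂ) ∈ Ideal.span (genSet n kk s t) := by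
  have h : monomial m (1:ℂ)
      = (X 0 ^ (m 0 - 1) * X 1 ^ (m 1 - 1) * X 2 ^ m 2) * (X 0 * X 1) := by
    rw [mono3, show (X 0 : Rpoly) ^ m 0 = X 0 ^ (m 0 - 1) * X 0 by
      rw [← pow_succ]; congr 1; omega,
      show (X 1 : Rpoly) ^ m 1 = X 1 ^ (m 1 - 1) * X 1 by
      rw [← pow_succ]; congr 1; omega]
    ring
  rw [h]
  exact Ideal.mul_mem_left _ _ (gen_mem5 n kk s t)

lemma X0_pow_kk_mem (ht : t = 0) (hs : s ≠ 0) :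
    (X 0 : Rpoly) ^ kk ∈ Ideal.span (genSet n kk s t) := by
  have h : (C s⁻¹ : Rpoly) * (C s * X 0 ^ kk - C t * X 1 ^ (n - kk)) = X 0 ^ kk := by
    rw [ht, map_zero, zero_mul, sub_zero, ← mul_assoc, ← C_mul, inv_mul_cancel₀ hs, C_1, one_mul]
  rw [← h]
  exact Ideal.mul_mem_left _ _ (gen_mem1 n kk s t)

lemma X1_rel_mem (ht : t ≠ 0) :
    X 1 ^ (n - kk) - (s * t⁻¹) • X 0 ^ kk ∈ Ideal.span (genSet n kk s t) := by
  have h : (C (-t⁻¹) : Rpoly) * (C s * X 0 ^ kk - C t * X 1 ^ (n - kk))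
      = X 1 ^ (n - kk) - (s * t⁻¹) • X 0 ^ kk := by
    rw [smul_eq_C_mul, mul_sub, ← mul_assoc, ← mul_assoc, ← C_mul, ← C_mul]
    rw [show -t⁻¹ * t = -1 by field_simp, show -t⁻¹ * s = -(s * t⁻¹) by ring]
    rw [map_neg, map_neg, C_1, neg_mul, neg_mul, one_mul, sub_neg_eq_add]
    ring
  rw [← h]
  exact Ideal.mul_mem_left _ _ (gen_mem1 n kk s t)

lemma mono_eq_X0_pow (m : Fin 3 →₀ ℕ) (hj : m 1 = 0) (hl : m 2 = 0) :
    monomial m (1:ℂ) = X 0 ^ (m 0) := by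
  conv_lhs => rw [m_eq_single0 m hj hl]
  rw [← X_pow_mono]

lemma mono_eq_X1_pow (m : Fin 3 →₀ ℕ) (hi : m 0 = 0) (hl : m 2 = 0) :
    monomial m (1:ℂ) = X 1 ^ (m 1) := by
  conv_lhs => rw [m_eq_single1 m hi hl]
  rw [← X_pow_mono]

lemma amSingle_zero (d : ZMod n) : AddMonoidAlgebra.single d (0:ℂ) = 0 := AddMonoidAlgebra.single_zero d

-- the key correction lemma
lemma sub_mem_mono [NeZero n] (hn : 2 ≤ n) (hk1 : 1 ≤ kk) (hk2 : kk ≤ n - 1)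
    (hst : ¬(s = 0 ∧ t = 0)) (m : Fin 3 →₀ ℕ) :
    monomial m (1:ℂ) - psiR n kk s t (Phi n kk s t (monomial m 1)) ∈
      Ideal.span (genSet n kk s t) := by
  have hkn : kk ≤ n := by omega
  have hnk1 : 1 ≤ n - kk := by omega
  rw [Phi_monomial, one_smul]
  by_cases hl : m 2 ≠ 0
  · rw [Vm_eq_zero _ _ _ _ _ (by unfold coefF; rw [if_pos hl]), map_zero, sub_zero]
    exact mono_mem_c n kk s t m hl
  push_neg at hl
  by_cases hij : m 0 ≠ 0 ∧ m 1 ≠ 0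
  · rw [Vm_eq_zero _ _ _ _ _ (by
      unfold coefF
      rw [if_neg (by omega), if_pos hij]), map_zero, sub_zero]
    exact mono_mem_ab n kk s t m hij.1 hij.2
  by_cases hj : m 1 = 0
  · -- pure a-power
    have hm : m = Finsupp.single (0 : Fin 3) (m 0) := m_eq_single0 m hj hl
    rw [Vm, hj, hl]
    rcases lt_trichotomy (m 0) kk with hlt | heq | hgt
    · have hc : coefF n kk s t (m 0) 0 0 = 1 := by
        unfold coefF; split_ifs <;> first | rfl | (exfalso; omega)
      rw [hc, psiR_single, one_smul, uRep]
      have hv : (((m 0 : ℕ) : ZMod n)).val = m 0 := val_natCast_of_lt n (by omega)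
      rw [Nat.cast_zero, sub_zero, if_pos (by rw [hv]; exact hlt), hv]
      rw [mono_eq_X0_pow m hj hl]
      simp only [sub_self]
      exact Ideal.zero_mem _
    · have hc : coefF n kk s t (m 0) 0 0 = t := by
        unfold coefF; split_ifs <;> first | rfl | (exfalso; omega)
      rw [hc, Nat.cast_zero, sub_zero, psiR_single, uRep]
      have hv : (((m 0 : ℕ) : ZMod n)).val = m 0 := val_natCast_of_lt n (by omega)
      rw [hv, heq, if_neg (lt_irrefl kk), if_pos rfl]
      by_cases ht : t ≠ 0
      · rw [if_pos ht]
        have hts : t • ((C t⁻¹ : Rpoly) * X 0 ^ kk) = X 0 ^ kk := by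
          rw [smul_eq_C_mul, ← mul_assoc, ← C_mul, mul_inv_cancel₀ ht, C_1, one_mul]
        rw [hts, mono_eq_X0_pow m hj hl, heq]
        simp only [sub_self]
        exact Ideal.zero_mem _
      · push_neg at ht
        have hs : s ≠ 0 := by tauto
        rw [if_neg (not_not_intro ht), ht, zero_smul, sub_zero, mono_eq_X0_pow m hj hl, heq]
        exact X0_pow_kk_mem n kk s 0 rfl hs
    · have hc : coefF n kk s t (m 0) 0 0 = 0 := by
        unfold coefF; split_ifs <;> first | rfl | (exfalso; omega)
      rw [hc, amSingle_zero, map_zero, sub_zero, mono_eq_X0_pow m hj hl]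
      exact X0_pow_mem n kk s t (m 0) (by omega)
  · -- pure b-power
    have hj' : m 1 ≠ 0 := hj
    have hi0 : m 0 = 0 := by tauto
    have hm : m = Finsupp.single (1 : Fin 3) (m 1) := m_eq_single1 m hi0 hl
    rw [Vm, hi0, hl, Nat.cast_zero, zero_sub]
    rcases lt_trichotomy (m 1) (n - kk) with hlt | heq | hgt
    · have hc : coefF n kk s t 0 (m 1) 0 = 1 := by
        unfold coefF; split_ifs <;> first | rfl | (exfalso; omega)
      rw [hc, psiR_single, one_smul, uRep]
      have hcast_nj : ((n - m 1 : ℕ) : ZMod n) = -((m 1 : ℕ) : ZMod n) := by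
        rw [← neg_cast_eq n (m 1) (by omega), neg_neg]
      rw [← hcast_nj]
      have hv : (((n - m 1 : ℕ) : ZMod n)).val = n - m 1 := val_natCast_of_lt n (by omega)
      rw [hv, if_neg (by omega), if_neg (by omega), show n - (n - m 1) = m 1 from by omega]
      rw [mono_eq_X1_pow m hi0 hl]
      simp only [sub_self]
      exact Ideal.zero_mem _
    · have hc : coefF n kk s t 0 (m 1) 0 = s := by
        unfold coefF; split_ifs <;> first | rfl | (exfalso; omega)
      rw [hc, heq, neg_cast_eq n kk hkn, psiR_single, uRep]
      have hv : ((kk : ZMod n) : ZMod n).val = kk := val_natCast_of_lt n (by omega)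
      rw [hv, if_neg (lt_irrefl kk), if_pos rfl]
      by_cases ht : t ≠ 0
      · rw [if_pos ht]
        have hss : s • ((C t⁻¹ : Rpoly) * X 0 ^ kk) = (s * t⁻¹) • X 0 ^ kk := by
          rw [smul_eq_C_mul, smul_eq_C_mul, ← mul_assoc, ← C_mul]
        rw [hss, mono_eq_X1_pow m hi0 hl, heq]
        exact X1_rel_mem n kk s t ht
      · push_neg at ht
        have hs : s ≠ 0 := by tauto
        rw [if_neg (not_not_intro ht)]
        have hss : s • ((C s⁻¹ : Rpoly) * X 1 ^ (n - kk)) = X 1 ^ (n - kk) := by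
          rw [smul_eq_C_mul, ← mul_assoc, ← C_mul, mul_inv_cancel₀ hs, C_1, one_mul]
        rw [hss, mono_eq_X1_pow m hi0 hl, heq]
        simp only [sub_self]
        exact Ideal.zero_mem _
    · have hc : coefF n kk s t 0 (m 1) 0 = 0 := by
        unfold coefF; split_ifs <;> first | rfl | (exfalso; omega)
      rw [hc, amSingle_zero, map_zero, sub_zero, mono_eq_X1_pow m hi0 hl]
      exact X1_pow_mem n kk s t (m 1) (by omega)


-- === new material ===

lemma span_monomials_top :
    Submodule.span ℂ (Set.range fun m : Fin 3 →₀ ℕ => (monomial m (1:ℂ))) = ⊤ := by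
  rw [show (fun m : Fin 3 →₀ ℕ => (monomial m (1:ℂ)))
      = ⇑(basisMonomials (Fin 3) ℂ) from (coe_basisMonomials (Fin 3) ℂ).symm]
  exact Module.Basis.span_eq _

lemma smul_mem_ideal (I : Ideal Rpoly) (c : ℂ) {x : Rpoly} (hx : x ∈ I) : c • x ∈ I := by
  rw [smul_eq_C_mul]
  exact Ideal.mul_mem_left _ _ hx

lemma Phi_eq_zero_of_mem [NeZero n] (hn : 2 ≤ n) (hk1 : 1 ≤ kk) (hk2 : kk ≤ n - 1)
    {x : Rpoly} (hx : x ∈ Ideal.span (genSet n kk s t)) : Phi n kk s t x = 0 := by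
  have hgen : ∀ g ∈ genSet n kk s t, ∀ r : Rpoly, Phi n kk s t (r * g) = 0 := by
    intro g hg
    have hcomp : (Phi n kk s t).comp (LinearMap.mulRight ℂ g) = 0 := by
      apply Module.Basis.ext (basisMonomials (Fin 3) ℂ)
      intro m
      rw [LinearMap.comp_apply, basisMonomials_apply, LinearMap.mulRight_apply]
      rw [Phi_mono_mul_gen n kk s t hn hk1 hk2 g hg m]
      rfl
    intro r
    have := LinearMap.ext_iff.mp hcomp r
    rwa [LinearMap.comp_apply, LinearMap.mulRight_apply, LinearMap.zero_apply] at this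
  have key : ∀ r : Rpoly, Phi n kk s t (r * x) = 0 := by
    refine Submodule.span_induction (p := fun x _ => ∀ r : Rpoly, Phi n kk s t (r * x) = 0)
      (fun g hg => hgen g hg) (by simp) ?_ ?_ hx
    · intro a b _ _ ha hb r
      rw [mul_add, map_add, ha, hb, add_zero]
    · intro a y _ hy r
      rw [smul_eq_mul, ← mul_assoc, hy]
  have := key 1
  rwa [one_mul] at this

lemma sub_psiR_Phi_mem [NeZero n] (hn : 2 ≤ n) (hk1 : 1 ≤ kk) (hk2 : kk ≤ n - 1)
    (hst : ¬(s = 0 ∧ t = 0)) (x : Rpoly) :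
    x - psiR n kk s t (Phi n kk s t x) ∈ Ideal.span (genSet n kk s t) := by
  have hx : x ∈ Submodule.span ℂ (Set.range fun m : Fin 3 →₀ ℕ => (monomial m (1:ℂ))) := by
    rw [span_monomials_top]; trivial
  refine Submodule.span_induction
    (p := fun x _ => x - psiR n kk s t (Phi n kk s t x) ∈ Ideal.span (genSet n kk s t))
    ?_ (by simp) ?_ ?_ hx
  · rintro y ⟨m, rfl⟩
    exact sub_mem_mono n kk s t hn hk1 hk2 hst m
  · intro a b _ _ ha hb
    have : a + b - psiR n kk s t (Phi n kk s t (a + b))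
        = (a - psiR n kk s t (Phi n kk s t a)) + (b - psiR n kk s t (Phi n kk s t b)) := by
      rw [map_add, map_add]; ring
    rw [this]
    exact Ideal.add_mem _ ha hb
  · intro c y _ hy
    have : c • y - psiR n kk s t (Phi n kk s t (c • y))
        = c • (y - psiR n kk s t (Phi n kk s t y)) := by
      rw [map_smul, map_smul, smul_sub]
    rw [this]
    exact smul_mem_ideal _ c hy

-- cycAct3 computations
lemma cycAct3_X0 (ζ : ℂ) : cycAct3 ζ (X 0) = C ζ * X 0 := by
  rw [cycAct3, aeval_X]; rfl
lemma cycAct3_X1 (ζ : ℂ) : cycAct3 ζ (X 1) = C ζ⁻¹ * X 1 := by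
  rw [cycAct3, aeval_X]; rfl
lemma cycAct3_X2 (ζ : ℂ) : cycAct3 ζ (X 2) = X 2 := by
  rw [cycAct3, aeval_X]; rfl

lemma cycAct3_monomial (ζ : ℂ) (m : Fin 3 →₀ ℕ) (r : ℂ) :
    cycAct3 ζ (monomial m r) = (ζ ^ m 0 * ζ⁻¹ ^ m 1) • monomial m r := by
  have hmono : monomial m r = C r * (X 0 ^ m 0 * X 1 ^ m 1 * X 2 ^ m 2) := by
    rw [← mono3, C_mul_monomial, mul_one]
  rw [hmono]
  rw [map_mul, map_mul, map_mul, map_pow, map_pow, map_pow,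
    cycAct3_X0, cycAct3_X1, cycAct3_X2]
  rw [show cycAct3 ζ (C r) = C r from by rw [cycAct3, aeval_C]; rfl]
  rw [smul_eq_C_mul, mul_pow, mul_pow, ← C_pow, ← C_pow, C_mul]
  ring

lemma zeta_inv_pow (hz : ζ ≠ 0) (h1 : ζ ^ n = 1) (hkn : kk ≤ n) :
    ζ⁻¹ ^ (n - kk) = ζ ^ kk := by
  have h : ζ ^ kk * ζ ^ (n - kk) = 1 := by
    rw [← pow_add, Nat.add_sub_cancel' hkn, h1]
  rw [inv_pow]
  exact inv_eq_of_mul_eq_one_left h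

lemma span_stable (hz : ζ ≠ 0) (h1 : ζ ^ n = 1) (hkn : kk ≤ n) :
    ∀ f ∈ Ideal.span (genSet n kk s t), cycAct3 ζ f ∈ Ideal.span (genSet n kk s t) := by
  intro f hf
  refine Submodule.span_induction
    (p := fun x _ => cycAct3 ζ x ∈ Ideal.span (genSet n kk s t)) ?_ (by simp) ?_ ?_ hf
  · rintro g (hg | hg | hg | hg | hg)
    · subst hg
      have : cycAct3 ζ (C s * X 0 ^ kk - C t * X 1 ^ (n - kk))
          = C (ζ ^ kk) * (C s * X 0 ^ kk - C t * X 1 ^ (n - kk)) := by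
        rw [map_sub, map_mul, map_mul, map_pow, map_pow, cycAct3_X0, cycAct3_X1,
          show cycAct3 ζ (C s) = C s from by rw [cycAct3, aeval_C]; rfl,
          show cycAct3 ζ (C t) = C t from by rw [cycAct3, aeval_C]; rfl,
          mul_pow, mul_pow, ← C_pow, ← C_pow, zeta_inv_pow n ζ kk hz h1 hkn]
        ring
      rw [this]
      exact Ideal.mul_mem_left _ _ (Ideal.subset_span (by left; rfl))
    · subst hg
      rw [cycAct3_X2]
      exact Ideal.subset_span (by right; left; rfl)
    · subst hg
      rw [map_pow, cycAct3_X0, mul_pow, ← C_pow]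
      exact Ideal.mul_mem_left _ _ (Ideal.subset_span (by right; right; left; rfl))
    · subst hg
      rw [map_pow, cycAct3_X1, mul_pow, ← C_pow]
      exact Ideal.mul_mem_left _ _ (Ideal.subset_span (by right; right; right; left; rfl))
    · rw [Set.mem_singleton_iff] at hg
      subst hg
      rw [map_mul, cycAct3_X0, cycAct3_X1]
      rw [mul_mul_mul_comm]
      exact Ideal.mul_mem_left _ _ (Ideal.subset_span (by right; right; right; right; rfl))
  · intro a b _ _ ha hb
    rw [map_add]
    exact Ideal.add_mem _ ha hb
  · intro r y _ hy
    rw [smul_eq_mul, map_mul]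
    exact Ideal.mul_mem_left _ _ hy

lemma chi_cast_sub [NeZero n] (hz : ζ ≠ 0) (h1 : ζ ^ n = 1) (i j : ℕ) :
    chi n ζ ((i : ZMod n) - (j : ZMod n)) = ζ ^ i * ζ⁻¹ ^ j := by
  have h := chi_add n ζ h1 ((i : ZMod n) - (j : ZMod n)) (j : ZMod n)
  rw [sub_add_cancel, chi_natCast n ζ h1, chi_natCast n ζ h1] at h
  have hj : ζ ^ j ≠ 0 := pow_ne_zero _ hz
  rw [inv_pow, ← div_eq_mul_inv, eq_div_iff hj]
  linear_combination -h

lemma intertwine [NeZero n] (hζ : IsPrimitiveRoot ζ n) (hn : 2 ≤ n) (f : Rpoly) :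
    Dmap n ζ (Phi n kk s t (cycAct3 ζ f))
      = AddMonoidAlgebra.single (1 : ZMod n) (1:ℂ) * Dmap n ζ (Phi n kk s t f) := by
  have h1 : ζ ^ n = 1 := hζ.pow_eq_one
  have hz : ζ ≠ 0 := by
    intro h
    rw [h, zero_pow (by omega)] at h1
    exact zero_ne_one h1
  have hcomp : (Dmap n ζ ∘ₗ Phi n kk s t) ∘ₗ (cycAct3 ζ).toLinearMap
      = (LinearMap.mulLeft ℂ (AddMonoidAlgebra.single (1 : ZMod n) (1:ℂ)))
          ∘ₗ (Dmap n ζ ∘ₗ Phi n kk s t) := by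
    apply Module.Basis.ext (basisMonomials (Fin 3) ℂ)
    intro m
    rw [LinearMap.comp_apply, LinearMap.comp_apply, LinearMap.comp_apply,
      LinearMap.comp_apply, basisMonomials_apply, LinearMap.mulLeft_apply]
    rw [show (cycAct3 ζ).toLinearMap (monomial m 1) = cycAct3 ζ (monomial m 1) from rfl]
    rw [cycAct3_monomial, map_smul, map_smul, Phi_monomial, one_smul, Vm, Dmap_single]
    rw [mul_smul_comm, shift_wv n ζ h1, chi_cast_sub n ζ hz h1, smul_comm]
  have := LinearMap.ext_iff.mp hcomp f
  simpa using this


lemma finrank_Amod [NeZero n] : Module.finrank ℂ (Amod n) = n := by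
  rw [Module.finrank_eq_card_basis (AddMonoidAlgebra.basis (ZMod n) ℂ), ZMod.card]

lemma backward_package [NeZero n] (hn : 2 ≤ n) (hζ : IsPrimitiveRoot ζ n)
    (hk1 : 1 ≤ kk) (hk2 : kk ≤ n - 1) (hst : ¬(s = 0 ∧ t = 0)) :
    ∃ e : (Rpoly ⧸ Ideal.span (genSet n kk s t)) ≃ₗ[ℂ] Amod n,
      ∀ f : Rpoly,
        e (Ideal.Quotient.mk (Ideal.span (genSet n kk s t)) (cycAct3 ζ f))
          = AddMonoidAlgebra.single (1 : ZMod n) (1:ℂ)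
              * e (Ideal.Quotient.mk (Ideal.span (genSet n kk s t)) f) := by
  set J : Ideal Rpoly := Ideal.span (genSet n kk s t) with hJdef
  have hle : J.restrictScalars ℂ ≤ LinearMap.ker (Phi n kk s t) := by
    intro x hx
    rw [LinearMap.mem_ker]
    exact Phi_eq_zero_of_mem n kk s t hn hk1 hk2 hx
  let E0 : (Rpoly ⧸ J) ≃ₗ[ℂ] (Rpoly ⧸ J.restrictScalars ℂ) :=
    (Submodule.Quotient.restrictScalarsEquiv ℂ J).symm
  let Φq : (Rpoly ⧸ J) →ₗ[ℂ] Amod n :=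
    (Submodule.liftQ (J.restrictScalars ℂ) (Phi n kk s t) hle) ∘ₗ E0.toLinearMap
  have hΦq : ∀ x : Rpoly, Φq (Ideal.Quotient.mk J x) = Phi n kk s t x := by
    intro x
    have h1 : E0 (Ideal.Quotient.mk J x) = Submodule.Quotient.mk x := by
      rw [show Ideal.Quotient.mk J x = Submodule.Quotient.mk x from rfl]
      rw [LinearEquiv.symm_apply_eq, Submodule.Quotient.restrictScalarsEquiv_mk]
    show Submodule.liftQ (J.restrictScalars ℂ) (Phi n kk s t) hle (E0 (Ideal.Quotient.mk J x))
      = Phi n kk s t x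
    rw [h1, Submodule.liftQ_apply]
  let Ψq : Amod n →ₗ[ℂ] (Rpoly ⧸ J) :=
    (Ideal.Quotient.mkₐ ℂ J).toLinearMap ∘ₗ psiR n kk s t
  have hΨq : ∀ a : Amod n, Ψq a = Ideal.Quotient.mk J (psiR n kk s t a) := fun a => rfl
  have hcomp1 : Φq ∘ₗ Ψq = LinearMap.id := by
    apply AddMonoidAlgebra.lhom_ext'
    intro d
    apply LinearMap.ext
    intro c
    show Φq (Ψq (AddMonoidAlgebra.single d c)) = AddMonoidAlgebra.single d c
    rw [show Ψq (AddMonoidAlgebra.single d c)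
        = Ideal.Quotient.mk J (c • uRep n kk s t d) from by rw [hΨq, psiR_single]]
    rw [show Ideal.Quotient.mk J (c • uRep n kk s t d)
        = c • Ideal.Quotient.mk J (uRep n kk s t d) from map_smul (Ideal.Quotient.mkₐ ℂ J) c _]
    rw [map_smul, hΦq, Phi_uRep n kk s t hn hk1 hk2 hst d]
    rw [AddMonoidAlgebra.smul_single, smul_eq_mul, mul_one]
  have hcomp2 : Ψq ∘ₗ Φq = LinearMap.id := by
    apply LinearMap.ext
    intro y
    obtain ⟨x, rfl⟩ := Ideal.Quotient.mk_surjective y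
    rw [LinearMap.comp_apply, hΦq, hΨq, LinearMap.id_apply]
    rw [Ideal.Quotient.eq]
    have h3 := sub_psiR_Phi_mem n kk s t hn hk1 hk2 hst x
    have h4 : psiR n kk s t (Phi n kk s t x) - x
        = -(x - psiR n kk s t (Phi n kk s t x)) := by ring
    rw [h4]
    exact neg_mem h3
  let e1 : (Rpoly ⧸ J) ≃ₗ[ℂ] Amod n := LinearEquiv.ofLinear Φq Ψq hcomp1 hcomp2
  have he1 : ∀ x : Rpoly, e1 (Ideal.Quotient.mk J x) = Phi n kk s t x := hΦq
  refine ⟨e1.trans (Dequiv n ζ hζ), ?_⟩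
  intro f
  rw [LinearEquiv.trans_apply, LinearEquiv.trans_apply, he1, he1,
    Dequiv_apply, Dequiv_apply]
  exact intertwine n ζ kk s t hζ hn f


-- ==== Section D ====

lemma cyc_X0_pow (i : ℕ) : cycAct3 ζ (X 0 ^ i) = (ζ ^ i) • (X 0 ^ i : Rpoly) := by
  obtain ⟨h0, h1, h2⟩ := single_vals0 i
  rw [X_pow_mono, cycAct3_monomial, h0, h1, pow_zero, mul_one]

lemma cyc_X1_pow (j : ℕ) : cycAct3 ζ (X 1 ^ j) = (ζ⁻¹ ^ j) • (X 1 ^ j : Rpoly) := by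
  obtain ⟨h0, h1, h2⟩ := single_vals1 j
  rw [X_pow_mono, cycAct3_monomial, h0, h1, pow_zero, one_mul]

lemma fwd_eigen [NeZero n] (J : Ideal Rpoly)
    (e : (Rpoly ⧸ J) ≃ₗ[ℂ] Amod n)
    (he : ∀ f, e (Ideal.Quotient.mk J (cycAct3 ζ f))
      = AddMonoidAlgebra.single (1 : ZMod n) (1:ℂ) * e (Ideal.Quotient.mk J f))
    (x : Rpoly) (z : ℂ) (hx : cycAct3 ζ x = z • x) :
    AddMonoidAlgebra.single (1 : ZMod n) (1:ℂ) * e (Ideal.Quotient.mk J x)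
      = z • e (Ideal.Quotient.mk J x) := by
  rw [← he, hx, show Ideal.Quotient.mk J (z • x) = z • Ideal.Quotient.mk J x from
    Submodule.Quotient.mk_smul J z x, map_smul]

lemma fwd_relation [NeZero n] (h1 : ζ ^ n = 1) (hz : ζ ≠ 0) (J : Ideal Rpoly)
    (e : (Rpoly ⧸ J) ≃ₗ[ℂ] Amod n)
    (he : ∀ f, e (Ideal.Quotient.mk J (cycAct3 ζ f))
      = AddMonoidAlgebra.single (1 : ZMod n) (1:ℂ) * e (Ideal.Quotient.mk J f))
    (d : ℕ) (hd : d ≤ n) :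
    (C ((e (Ideal.Quotient.mk J (X 1 ^ (n - d)))) 0) * X 0 ^ d
      - C ((e (Ideal.Quotient.mk J (X 0 ^ d))) 0) * X 1 ^ (n - d) ∈ J)
    ∧ ((e (Ideal.Quotient.mk J (X 0 ^ d))) 0 = 0 → (X 0 : Rpoly) ^ d ∈ J)
    ∧ ((e (Ideal.Quotient.mk J (X 1 ^ (n - d)))) 0 = 0 → (X 1 : Rpoly) ^ (n - d) ∈ J) := by
  set u := e (Ideal.Quotient.mk J (X 0 ^ d)) with hu_def
  set v := e (Ideal.Quotient.mk J (X 1 ^ (n - d))) with hv_def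
  have hcne : chi n ζ (d : ZMod n) ≠ 0 := by
    rw [chi_natCast n ζ h1]
    exact pow_ne_zero _ hz
  have hu : AddMonoidAlgebra.single (1 : ZMod n) (1:ℂ) * u = chi n ζ (d : ZMod n) • u := by
    rw [chi_natCast n ζ h1]
    exact fwd_eigen n ζ J e he _ _ (cyc_X0_pow ζ d)
  have hv : AddMonoidAlgebra.single (1 : ZMod n) (1:ℂ) * v = chi n ζ (d : ZMod n) • v := by
    rw [chi_natCast n ζ h1]
    refine fwd_eigen n ζ J e he _ _ ?_
    rw [cyc_X1_pow, zeta_inv_pow n ζ d hz h1 hd]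
  refine ⟨?_, ?_, ?_⟩
  · have hpair := eig_pair n u v (chi n ζ (d : ZMod n)) hcne hu hv
    have hkey : e (Ideal.Quotient.mk J (C (v 0) * X 0 ^ d - C (u 0) * X 1 ^ (n - d))) = 0 := by
      rw [map_sub, ← smul_eq_C_mul, ← smul_eq_C_mul,
        show Ideal.Quotient.mk J (v 0 • (X 0 ^ d : Rpoly))
          = v 0 • Ideal.Quotient.mk J (X 0 ^ d) from Submodule.Quotient.mk_smul J _ _,
        show Ideal.Quotient.mk J (u 0 • (X 1 ^ (n - d) : Rpoly))
          = u 0 • Ideal.Quotient.mk J (X 1 ^ (n - d)) from Submodule.Quotient.mk_smul J _ _,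
        map_sub, map_smul, map_smul, ← hu_def, ← hv_def, hpair, sub_self]
    rw [LinearEquiv.map_eq_zero_iff] at hkey
    exact Ideal.Quotient.eq_zero_iff_mem.mp hkey
  · intro h0
    have := eig_eq_zero n u _ hcne hu h0
    rw [hu_def, LinearEquiv.map_eq_zero_iff] at this
    exact Ideal.Quotient.eq_zero_iff_mem.mp this
  · intro h0
    have := eig_eq_zero n v _ hcne hv h0
    rw [hv_def, LinearEquiv.map_eq_zero_iff] at this
    exact Ideal.Quotient.eq_zero_iff_mem.mp this

lemma fwd_deg0 [NeZero n] (J : Ideal Rpoly)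
    (hJcc : ∀ y ∈ J, constantCoeff y = 0)
    (e : (Rpoly ⧸ J) ≃ₗ[ℂ] Amod n)
    (he : ∀ f, e (Ideal.Quotient.mk J (cycAct3 ζ f))
      = AddMonoidAlgebra.single (1 : ZMod n) (1:ℂ) * e (Ideal.Quotient.mk J f))
    (x : Rpoly) (hfix : cycAct3 ζ x = x) (hcc : constantCoeff x = 0) : x ∈ J := by
  set f := e (Ideal.Quotient.mk J x) with hf_def
  set g := e (Ideal.Quotient.mk J 1) with hg_def
  have hf : AddMonoidAlgebra.single (1 : ZMod n) (1:ℂ) * f = (1:ℂ) • f :=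
    fwd_eigen n ζ J e he x 1 (by rw [hfix, one_smul])
  have hg : AddMonoidAlgebra.single (1 : ZMod n) (1:ℂ) * g = (1:ℂ) • g :=
    fwd_eigen n ζ J e he 1 1 (by rw [map_one, one_smul])
  have hpair := eig_pair n f g (1:ℂ) one_ne_zero hf hg
  have hg0 : g 0 ≠ 0 := by
    intro h0
    have := eig_eq_zero n g _ one_ne_zero hg h0
    rw [hg_def, LinearEquiv.map_eq_zero_iff, Ideal.Quotient.eq_zero_iff_mem] at this
    have := hJcc 1 this
    simpa using this
  have hkey : e (Ideal.Quotient.mk J (C (g 0) * x - C (f 0) * 1)) = 0 := by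
    rw [map_sub, ← smul_eq_C_mul, ← smul_eq_C_mul,
      show Ideal.Quotient.mk J (g 0 • x) = g 0 • Ideal.Quotient.mk J x from
        Submodule.Quotient.mk_smul J _ _,
      show Ideal.Quotient.mk J (f 0 • (1:Rpoly)) = f 0 • Ideal.Quotient.mk J 1 from
        Submodule.Quotient.mk_smul J _ _,
      map_sub, map_smul, map_smul, ← hf_def, show e (Ideal.Quotient.mk J 1) = g from rfl,
      hpair, sub_self]
  rw [LinearEquiv.map_eq_zero_iff, Ideal.Quotient.eq_zero_iff_mem] at hkey
  have hccy := hJcc _ hkey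
  rw [map_sub, map_mul, map_mul, hcc, constantCoeff_C, constantCoeff_C, mul_zero,
    map_one, mul_one, zero_sub, neg_eq_zero] at hccy
  -- f 0 = 0, so C (g 0) * x ∈ J
  have hx2 : C (g 0) * x ∈ J := by
    have heq : C (g 0) * x = (C (g 0) * x - C (f 0) * 1) + C (f 0) * 1 := by ring
    rw [heq]
    refine Ideal.add_mem _ hkey ?_
    rw [hccy, C_0, zero_mul]
    exact Ideal.zero_mem _
  have hfin : (C (g 0)⁻¹ : Rpoly) * (C (g 0) * x) = x := by
    rw [← mul_assoc, ← C_mul, inv_mul_cancel₀ hg0, C_1, one_mul]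
  rw [← hfin]
  exact Ideal.mul_mem_left _ _ hx2

lemma mono_factor_c (m : Fin 3 →₀ ℕ) (hl : m 2 ≠ 0) :
    monomial m (1:ℂ) = (X 0 ^ m 0 * X 1 ^ m 1 * X 2 ^ (m 2 - 1)) * X 2 := by
  rw [mono3, show (X 2 : Rpoly) ^ m 2 = X 2 ^ (m 2 - 1) * X 2 by
    rw [← pow_succ]; congr 1; omega]
  ring

lemma mono_factor_ab (m : Fin 3 →₀ ℕ) (hi : m 0 ≠ 0) (hj : m 1 ≠ 0) :
    monomial m (1:ℂ)
      = (X 0 ^ (m 0 - 1) * X 1 ^ (m 1 - 1) * X 2 ^ m 2) * (X 0 * X 1) := by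
  rw [mono3, show (X 0 : Rpoly) ^ m 0 = X 0 ^ (m 0 - 1) * X 0 by
    rw [← pow_succ]; congr 1; omega,
    show (X 1 : Rpoly) ^ m 1 = X 1 ^ (m 1 - 1) * X 1 by
    rw [← pow_succ]; congr 1; omega]
  ring

lemma span_bound [NeZero n] (J : Ideal Rpoly) (K L : ℕ) (hL1 : 1 ≤ L)
    (hX2 : (X 2 : Rpoly) ∈ J) (hab : (X 0 * X 1 : Rpoly) ∈ J)
    (haK : ∀ i, K ≤ i → (X 0 : Rpoly) ^ i ∈ J) (hbL : ∀ j, L ≤ j → (X 1 : Rpoly) ^ j ∈ J)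
    (hdim : Module.finrank ℂ (Rpoly ⧸ J) = n) : n ≤ (K - 1) + L := by
  classical
  set mkq : Rpoly →ₗ[ℂ] (Rpoly ⧸ J) := (Ideal.Quotient.mkₐ ℂ J).toLinearMap with hmkq
  have hmkq_apply : ∀ x, mkq x = Ideal.Quotient.mk J x := fun x => rfl
  set TS : Finset (Rpoly ⧸ J) :=
    ((Finset.Ico 1 K).image fun i => Ideal.Quotient.mk J (X 0 ^ i))
    ∪ ((Finset.range L).image fun j => Ideal.Quotient.mk J (X 1 ^ j)) with hTS
  have hmono : ∀ m : Fin 3 →₀ ℕ,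
      Ideal.Quotient.mk J (monomial m 1) ∈ Submodule.span ℂ (TS : Set (Rpoly ⧸ J)) := by
    intro m
    by_cases hl : m 2 ≠ 0
    · rw [Ideal.Quotient.eq_zero_iff_mem.mpr
        (by rw [mono_factor_c m hl]; exact Ideal.mul_mem_left _ _ hX2)]
      exact Submodule.zero_mem _
    push_neg at hl
    by_cases hij : m 0 ≠ 0 ∧ m 1 ≠ 0
    · rw [Ideal.Quotient.eq_zero_iff_mem.mpr
        (by rw [mono_factor_ab m hij.1 hij.2]; exact Ideal.mul_mem_left _ _ hab)]
      exact Submodule.zero_mem _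
    by_cases hj : m 1 = 0
    · rw [mono_eq_X0_pow m hj hl]
      by_cases hK : m 0 < K
      · by_cases h0 : m 0 = 0
        · apply Submodule.subset_span
          rw [hTS]
          apply Finset.mem_coe.mpr
          apply Finset.mem_union_right
          apply Finset.mem_image.mpr
          exact ⟨0, Finset.mem_range.mpr hL1, by rw [pow_zero, h0, pow_zero]⟩
        · apply Submodule.subset_span
          rw [hTS]
          apply Finset.mem_coe.mpr
          apply Finset.mem_union_left
          apply Finset.mem_image.mpr
          exact ⟨m 0, Finset.mem_Ico.mpr ⟨by omega, hK⟩, rfl⟩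
      · rw [Ideal.Quotient.eq_zero_iff_mem.mpr (haK _ (by omega))]
        exact Submodule.zero_mem _
    · have hi : m 0 = 0 := by tauto
      rw [mono_eq_X1_pow m hi hl]
      by_cases hL : m 1 < L
      · apply Submodule.subset_span
        rw [hTS]
        apply Finset.mem_coe.mpr
        apply Finset.mem_union_right
        apply Finset.mem_image.mpr
        exact ⟨m 1, Finset.mem_range.mpr hL, rfl⟩
      · rw [Ideal.Quotient.eq_zero_iff_mem.mpr (hbL _ (by omega))]
        exact Submodule.zero_mem _
  have hspan : Submodule.span ℂ (TS : Set (Rpoly ⧸ J)) = ⊤ := by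
    rw [eq_top_iff]
    intro y _
    obtain ⟨x, rfl⟩ := Ideal.Quotient.mk_surjective y
    have hx : x ∈ Submodule.span ℂ (Set.range fun m : Fin 3 →₀ ℕ => (monomial m (1:ℂ))) := by
      rw [span_monomials_top]; trivial
    have hximg : Ideal.Quotient.mk J x
        ∈ Submodule.map mkq (Submodule.span ℂ (Set.range fun m : Fin 3 →₀ ℕ =>
            (monomial m (1:ℂ)))) :=
      Submodule.mem_map_of_mem hx
    rw [Submodule.map_span] at hximg
    refine Submodule.span_le.mpr ?_ hximg
    rintro _ ⟨_, ⟨m, rfl⟩, rfl⟩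
    exact hmono m
  have hcard : TS.card ≤ (K - 1) + L := by
    calc TS.card ≤ ((Finset.Ico 1 K).image fun i => Ideal.Quotient.mk J (X 0 ^ i)).card
        + ((Finset.range L).image fun j => Ideal.Quotient.mk J (X 1 ^ j)).card :=
          Finset.card_union_le _ _
      _ ≤ (Finset.Ico 1 K).card + (Finset.range L).card :=
          Nat.add_le_add (Finset.card_image_le) (Finset.card_image_le)
      _ = (K - 1) + L := by rw [Nat.card_Ico, Finset.card_range]
  calc n = Module.finrank ℂ (Rpoly ⧸ J) := hdim.symm
    _ = Module.finrank ℂ (⊤ : Submodule ℂ (Rpoly ⧸ J)) := (finrank_top ℂ _).symm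
    _ = Module.finrank ℂ (Submodule.span ℂ (TS : Set (Rpoly ⧸ J))) := by rw [hspan]
    _ ≤ TS.card := finrank_span_finset_le_card TS
    _ ≤ (K - 1) + L := hcard

lemma ideal_le_of_finrank (I J : Ideal Rpoly) (hIJ : I ≤ J)
    (hfdI : FiniteDimensional ℂ (Rpoly ⧸ I)) (hfdJ : FiniteDimensional ℂ (Rpoly ⧸ J))
    (hrank : Module.finrank ℂ (Rpoly ⧸ I) = Module.finrank ℂ (Rpoly ⧸ J)) : J ≤ I := by
  have hker : I.restrictScalars ℂ ≤ LinearMap.ker ((Ideal.Quotient.mkₐ ℂ J).toLinearMap) := by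
    intro x hx
    rw [LinearMap.mem_ker]
    exact Ideal.Quotient.eq_zero_iff_mem.mpr (hIJ hx)
  let γ : (Rpoly ⧸ I) →ₗ[ℂ] (Rpoly ⧸ J) :=
    (Submodule.liftQ (I.restrictScalars ℂ) _ hker)
      ∘ₗ (Submodule.Quotient.restrictScalarsEquiv ℂ I).symm.toLinearMap
  have hγ : ∀ x : Rpoly, γ (Ideal.Quotient.mk I x) = Ideal.Quotient.mk J x := by
    intro x
    have h1 : (Submodule.Quotient.restrictScalarsEquiv ℂ I).symm (Ideal.Quotient.mk I x)
        = Submodule.Quotient.mk x := by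
      rw [show Ideal.Quotient.mk I x = Submodule.Quotient.mk x from rfl]
      rw [LinearEquiv.symm_apply_eq, Submodule.Quotient.restrictScalarsEquiv_mk]
    show (Submodule.liftQ (I.restrictScalars ℂ) _ hker)
      ((Submodule.Quotient.restrictScalarsEquiv ℂ I).symm (Ideal.Quotient.mk I x))
      = Ideal.Quotient.mk J x
    rw [h1, Submodule.liftQ_apply]
    rfl
  have hsurj : Function.Surjective γ := by
    intro y
    obtain ⟨x, rfl⟩ := Ideal.Quotient.mk_surjective y
    exact ⟨Ideal.Quotient.mk I x, hγ x⟩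
  have hinj : Function.Injective γ :=
    (LinearMap.injective_iff_surjective_of_finrank_eq_finrank hrank).mpr hsurj
  intro x hx
  have h0 : γ (Ideal.Quotient.mk I x) = 0 := by
    rw [hγ]
    exact Ideal.Quotient.eq_zero_iff_mem.mpr hx
  have := hinj (by rw [h0, map_zero] : γ (Ideal.Quotient.mk I x) = γ 0)
  exact Ideal.Quotient.eq_zero_iff_mem.mp this

end Stmt17Aux

end Stmt17AuxSection


/-- For the cyclic group `C_n ≅ ℤ/nℤ` acting on `ℂ[a,b,c]` with generator `a ↦ ζa`,
`b ↦ ζ⁻¹b`, `c ↦ c` (`ζ` a primitive `n`-th root of unity), an ideal `J ⊆ ⟨a,b,c⟩` is a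
`C_n`-cluster (stable under the action, with `ℂ[a,b,c]/J` isomorphic as a module over
the group algebra to the regular representation `ℂ[ℤ/nℤ]`) iff it has the form
`⟨s·aᵏ - t·b^{n-k}, c, a^{k+1}, b^{n-k+1}, ab⟩` for some `1 ≤ k ≤ n-1` and
`(s,t) ≠ (0,0)`. -/
theorem stmt17 (n : ℕ) (hn : 2 ≤ n) (ζ : ℂ) (hζ : IsPrimitiveRoot ζ n)
    (J : Ideal (MvPolynomial (Fin 3) ℂ))
    (hJ : J ≤ Ideal.span (Set.range (X : Fin 3 → MvPolynomial (Fin 3) ℂ))) :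
    ((∀ f ∈ J, cycAct3 ζ f ∈ J) ∧
      ∃ e : (MvPolynomial (Fin 3) ℂ ⧸ J) ≃ₗ[ℂ] AddMonoidAlgebra ℂ (ZMod n),
        ∀ f : MvPolynomial (Fin 3) ℂ,
          e (Ideal.Quotient.mk J (cycAct3 ζ f)) =
            AddMonoidAlgebra.single (1 : ZMod n) (1 : ℂ) * e (Ideal.Quotient.mk J f))
    ↔
    ∃ k : ℕ, 1 ≤ k ∧ k ≤ n - 1 ∧ ∃ s t : ℂ, (s, t) ≠ (0, 0) ∧
      J = Ideal.span {C s * X 0 ^ k - C t * X 1 ^ (n - k), X 2,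
        X 0 ^ (k + 1), X 1 ^ (n - k + 1), X 0 * X 1} := by
  classical
  haveI : NeZero n := ⟨by omega⟩
  have h1 : ζ ^ n = 1 := hζ.pow_eq_one
  have hz : ζ ≠ 0 := by
    intro h
    rw [h, zero_pow (by omega : n ≠ 0)] at h1
    exact zero_ne_one h1
  constructor
  · rintro ⟨hstab, e, he⟩
    have hJcc : ∀ y ∈ J, constantCoeff y = 0 := by
      intro y hy
      have hle : Ideal.span (Set.range (X : Fin 3 → MvPolynomial (Fin 3) ℂ))
          ≤ RingHom.ker (constantCoeff (σ := Fin 3) (R := ℂ)) := by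
        rw [Ideal.span_le]
        rintro _ ⟨i, rfl⟩
        simp [RingHom.mem_ker]
      exact hle (hJ hy)
    have hX2 : (X 2 : Stmt17Aux.Rpoly) ∈ J :=
      Stmt17Aux.fwd_deg0 n ζ J hJcc e he (X 2) (Stmt17Aux.cycAct3_X2 ζ) (by simp)
    have hab : (X 0 * X 1 : Stmt17Aux.Rpoly) ∈ J :=
      Stmt17Aux.fwd_deg0 n ζ J hJcc e he _ (by
        rw [map_mul, Stmt17Aux.cycAct3_X0, Stmt17Aux.cycAct3_X1, mul_mul_mul_comm, ← C_mul,
          mul_inv_cancel₀ hz, C_1, one_mul]) (by simp)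
    have hXan : (X 0 : Stmt17Aux.Rpoly) ^ n ∈ J :=
      Stmt17Aux.fwd_deg0 n ζ J hJcc e he _ (by rw [Stmt17Aux.cyc_X0_pow, h1, one_smul])
        (by simp [zero_pow (by omega : n ≠ 0)])
    have hXbn : (X 1 : Stmt17Aux.Rpoly) ^ n ∈ J :=
      Stmt17Aux.fwd_deg0 n ζ J hJcc e he _
        (by rw [Stmt17Aux.cyc_X1_pow, inv_pow, h1, inv_one, one_smul])
        (by simp [zero_pow (by omega : n ≠ 0)])
    have hKex : ∃ i, (X 0 : Stmt17Aux.Rpoly) ^ i ∈ J := ⟨n, hXan⟩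
    have hLex : ∃ j, (X 1 : Stmt17Aux.Rpoly) ^ j ∈ J := ⟨n, hXbn⟩
    set K := Nat.find hKex with hKdef
    set L := Nat.find hLex with hLdef
    have hK : (X 0 : Stmt17Aux.Rpoly) ^ K ∈ J := Nat.find_spec hKex
    have hL : (X 1 : Stmt17Aux.Rpoly) ^ L ∈ J := Nat.find_spec hLex
    have hKn : K ≤ n := Nat.find_le hXan
    have hLn : L ≤ n := Nat.find_le hXbn
    have h1J : (1 : Stmt17Aux.Rpoly) ∉ J := by
      intro h
      have := hJcc 1 h
      simp at this
    have hK1 : 1 ≤ K := by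
      rcases Nat.eq_zero_or_pos K with h0 | h
      · exfalso
        apply h1J
        have h2 := hK
        rwa [h0, pow_zero] at h2
      · exact h
    have hL1 : 1 ≤ L := by
      rcases Nat.eq_zero_or_pos L with h0 | h
      · exfalso
        apply h1J
        have h2 := hL
        rwa [h0, pow_zero] at h2
      · exact h
    have haK : ∀ i, K ≤ i → (X 0 : Stmt17Aux.Rpoly) ^ i ∈ J := by
      intro i hi
      have h2 : (X 0 : Stmt17Aux.Rpoly) ^ i = X 0 ^ (i - K) * X 0 ^ K := by
        rw [← pow_add]
        congr 1
        omega
      rw [h2]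
      exact Ideal.mul_mem_left _ _ hK
    have hbL : ∀ j, L ≤ j → (X 1 : Stmt17Aux.Rpoly) ^ j ∈ J := by
      intro j hj
      have h2 : (X 1 : Stmt17Aux.Rpoly) ^ j = X 1 ^ (j - L) * X 1 ^ L := by
        rw [← pow_add]
        congr 1
        omega
      rw [h2]
      exact Ideal.mul_mem_left _ _ hL
    have hKmin : ∀ i, i < K → (X 0 : Stmt17Aux.Rpoly) ^ i ∉ J := fun i hi => Nat.find_min hKex hi
    have hLmin : ∀ j, j < L → (X 1 : Stmt17Aux.Rpoly) ^ j ∉ J := fun j hj => Nat.find_min hLex hj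
    have hdim : Module.finrank ℂ (Stmt17Aux.Rpoly ⧸ J) = n := by
      rw [LinearEquiv.finrank_eq e, Stmt17Aux.finrank_Amod]
    have hlow : n ≤ (K - 1) + L :=
      Stmt17Aux.span_bound n J K L hL1 hX2 hab haK hbL hdim
    have hup : K + L ≤ n + 2 := by
      by_contra hc
      push_neg at hc
      have hL2 : 2 ≤ L := by omega
      obtain ⟨hrel, hu0, hv0⟩ :=
        Stmt17Aux.fwd_relation n ζ h1 hz J e he (n - L + 1) (by omega)
      have hun : (e (Ideal.Quotient.mk J (X 0 ^ (n - L + 1)))) 0 ≠ 0 := by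
        intro h0
        have hmem := hu0 h0
        have hKd : K ≤ n - L + 1 := by
          by_contra hKd
          push_neg at hKd
          exact hKmin _ hKd hmem
        omega
      have hvn : (e (Ideal.Quotient.mk J (X 1 ^ (n - (n - L + 1))))) 0 ≠ 0 := by
        intro h0
        have hmem := hv0 h0
        exact hLmin _ (by omega) hmem
      have hmul : (X 0 : Stmt17Aux.Rpoly) *
          (C ((e (Ideal.Quotient.mk J (X 1 ^ (n - (n - L + 1))))) 0) * X 0 ^ (n - L + 1)
            - C ((e (Ideal.Quotient.mk J (X 0 ^ (n - L + 1)))) 0) * X 1 ^ (n - (n - L + 1))) ∈ J :=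
        Ideal.mul_mem_left _ _ hrel
      have hXb : (X 0 : Stmt17Aux.Rpoly) * X 1 ^ (n - (n - L + 1)) ∈ J := by
        have h2 : (X 0 : Stmt17Aux.Rpoly) * X 1 ^ (n - (n - L + 1))
            = X 1 ^ (n - (n - L + 1) - 1) * (X 0 * X 1) := by
          rw [show (X 1 : Stmt17Aux.Rpoly) ^ (n - (n - L + 1))
            = X 1 ^ (n - (n - L + 1) - 1) * X 1 by rw [← pow_succ]; congr 1; omega]
          ring
        rw [h2]
        exact Ideal.mul_mem_left _ _ hab
      have hCv : C ((e (Ideal.Quotient.mk J (X 1 ^ (n - (n - L + 1))))) 0)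
          * X 0 ^ (n - L + 1 + 1) ∈ J := by
        have heq : C ((e (Ideal.Quotient.mk J (X 1 ^ (n - (n - L + 1))))) 0)
            * (X 0 : Stmt17Aux.Rpoly) ^ (n - L + 1 + 1)
            = X 0 * (C ((e (Ideal.Quotient.mk J (X 1 ^ (n - (n - L + 1))))) 0)
                * X 0 ^ (n - L + 1)
              - C ((e (Ideal.Quotient.mk J (X 0 ^ (n - L + 1)))) 0) * X 1 ^ (n - (n - L + 1)))
            + C ((e (Ideal.Quotient.mk J (X 0 ^ (n - L + 1)))) 0)
                * (X 0 * X 1 ^ (n - (n - L + 1))) := by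
          ring
        rw [heq]
        exact Ideal.add_mem _ hmul (Ideal.mul_mem_left _ _ hXb)
      have hXd1 : (X 0 : Stmt17Aux.Rpoly) ^ (n - L + 1 + 1) ∈ J := by
        have heq : (C ((e (Ideal.Quotient.mk J (X 1 ^ (n - (n - L + 1))))) 0)⁻¹
              : Stmt17Aux.Rpoly)
            * (C ((e (Ideal.Quotient.mk J (X 1 ^ (n - (n - L + 1))))) 0)
                * X 0 ^ (n - L + 1 + 1))
            = X 0 ^ (n - L + 1 + 1) := by
          rw [← mul_assoc, ← C_mul, inv_mul_cancel₀ hvn, C_1, one_mul]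
        rw [← heq]
        exact Ideal.mul_mem_left _ _ hCv
      have hK2 : K ≤ n - L + 1 + 1 := by
        by_contra hKd
        push_neg at hKd
        exact hKmin _ hKd hXd1
      omega
    obtain ⟨hrel, hu0, hv0⟩ :=
      Stmt17Aux.fwd_relation n ζ h1 hz J e he (max (K - 1) 1) (by omega)
    refine ⟨max (K - 1) 1, le_max_right _ _, by omega,
      (e (Ideal.Quotient.mk J (X 1 ^ (n - max (K - 1) 1)))) 0,
      (e (Ideal.Quotient.mk J (X 0 ^ (max (K - 1) 1)))) 0, ?_, ?_⟩
    · intro hpair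
      have hs0 := congrArg Prod.fst hpair
      have ht0 := congrArg Prod.snd hpair
      simp only [] at hs0 ht0
      have hXk := hu0 ht0
      have hXnk := hv0 hs0
      have hc1 : K ≤ max (K - 1) 1 := by
        by_contra hc
        push_neg at hc
        exact hKmin _ hc hXk
      have hc2 : L ≤ n - max (K - 1) 1 := by
        by_contra hc
        push_neg at hc
        exact hLmin _ hc hXnk
      omega
    · have hst : ¬((e (Ideal.Quotient.mk J (X 1 ^ (n - max (K - 1) 1)))) 0 = 0
          ∧ (e (Ideal.Quotient.mk J (X 0 ^ (max (K - 1) 1)))) 0 = 0) := by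
        rintro ⟨hs0, ht0⟩
        have hXk := hu0 ht0
        have hXnk := hv0 hs0
        have hc1 : K ≤ max (K - 1) 1 := by
          by_contra hc
          push_neg at hc
          exact hKmin _ hc hXk
        have hc2 : L ≤ n - max (K - 1) 1 := by
          by_contra hc
          push_neg at hc
          exact hLmin _ hc hXnk
        omega
      have hspanle : Ideal.span (Stmt17Aux.genSet n (max (K - 1) 1)
          ((e (Ideal.Quotient.mk J (X 1 ^ (n - max (K - 1) 1)))) 0)
          ((e (Ideal.Quotient.mk J (X 0 ^ (max (K - 1) 1)))) 0)) ≤ J := by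
        rw [Ideal.span_le]
        rintro g (hg | hg | hg | hg | hg)
        · subst hg; exact hrel
        · subst hg; exact hX2
        · subst hg; exact haK _ (by omega)
        · subst hg; exact hbL _ (by omega)
        · rw [Set.mem_singleton_iff] at hg; subst hg; exact hab
      obtain ⟨e', he'⟩ := Stmt17Aux.backward_package n ζ (max (K - 1) 1)
        ((e (Ideal.Quotient.mk J (X 1 ^ (n - max (K - 1) 1)))) 0)
        ((e (Ideal.Quotient.mk J (X 0 ^ (max (K - 1) 1)))) 0)
        hn hζ (le_max_right _ _) (by omega) hst
      have hfdJ : FiniteDimensional ℂ (Stmt17Aux.Rpoly ⧸ J) :=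
        LinearEquiv.finiteDimensional e.symm
      have hfdI : FiniteDimensional ℂ (Stmt17Aux.Rpoly ⧸ Ideal.span
          (Stmt17Aux.genSet n (max (K - 1) 1)
            ((e (Ideal.Quotient.mk J (X 1 ^ (n - max (K - 1) 1)))) 0)
            ((e (Ideal.Quotient.mk J (X 0 ^ (max (K - 1) 1)))) 0))) :=
        LinearEquiv.finiteDimensional e'.symm
      have hrank : Module.finrank ℂ (Stmt17Aux.Rpoly ⧸ Ideal.span
            (Stmt17Aux.genSet n (max (K - 1) 1)
              ((e (Ideal.Quotient.mk J (X 1 ^ (n - max (K - 1) 1)))) 0)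
              ((e (Ideal.Quotient.mk J (X 0 ^ (max (K - 1) 1)))) 0)))
          = Module.finrank ℂ (Stmt17Aux.Rpoly ⧸ J) := by
        rw [LinearEquiv.finrank_eq e', LinearEquiv.finrank_eq e]
      have hJle := Stmt17Aux.ideal_le_of_finrank _ J hspanle hfdI hfdJ hrank
      exact le_antisymm hJle hspanle
  · rintro ⟨k, hk1, hk2, s, t, hst, rfl⟩
    have hst' : ¬(s = 0 ∧ t = 0) := by
      rintro ⟨hs, ht⟩
      apply hst
      rw [hs, ht]
    constructor
    · intro f hf
      exact Stmt17Aux.span_stable n ζ k s t hz h1 (by omega) f hf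
    · obtain ⟨e, he⟩ := Stmt17Aux.backward_package n ζ k s t hn hζ hk1 hk2 hst'
      exact ⟨e, he⟩
end

section
/- Fix n ≥ 2, an integer k with 1 ≤ k ≤ n−1, and (p,q) ∈ ℂ² with (p,q) ≠ (0,0). Then the preimage under σ of the ideal ⟨p·x^{2k} − q·y^{2n−2k}, xy, x^{2k+1}, y^{2n−2k+1}⟩ of ℂ[x,y] is the ideal ⟨p·a^k − q·b^{n−k}, c, a^{k+1}, b^{n−k+1}, ab⟩ of ℂ[a,b,c]. -/
open MvPolynomial

/-- The ℂ-algebra homomorphism `σ : ℂ[a,b,c] → ℂ[x,y]` with `σ(a)=x²`, `σ(b)=y²`,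
`σ(c)=xy`. -/
noncomputable def sigmaHom : MvPolynomial (Fin 3) ℂ →ₐ[ℂ] MvPolynomial (Fin 2) ℂ :=
  aeval ![X 0 ^ 2, X 1 ^ 2, X 0 * X 1]


-- coeff of f * X i ^ e
lemma coeff_mul_Xpow (f : MvPolynomial (Fin 2) ℂ) (i : Fin 2) (e : ℕ) (m : Fin 2 →₀ ℕ) :
    coeff m (f * X i ^ e) =
      if Finsupp.single i e ≤ m then coeff (m - Finsupp.single i e) f else 0 := by
  rw [X_pow_eq_monomial, coeff_mul_monomial']
  split <;> simp

lemma X0X1_eq : (X 0 * X 1 : MvPolynomial (Fin 2) ℂ)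
    = monomial (Finsupp.single 0 1 + Finsupp.single 1 1) 1 := by
  rw [X, X, monomial_mul, mul_one]

lemma not_le_single01 (s : ℕ) :
    ¬ (Finsupp.single (0:Fin 2) 1 + Finsupp.single 1 1 ≤ Finsupp.single 0 s) := by
  intro h
  have := h 1
  simp [Finsupp.single_apply] at this

lemma not_le_single10 (t : ℕ) :
    ¬ (Finsupp.single (0:Fin 2) 1 + Finsupp.single 1 1 ≤ Finsupp.single 1 t) := by
  intro h
  have := h 0
  simp [Finsupp.single_apply] at this

lemma single_le_single_same (i : Fin 2) (a b : ℕ) :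
    (Finsupp.single i a ≤ Finsupp.single i b) ↔ a ≤ b := by
  rw [Finsupp.single_le_iff, Finsupp.single_eq_same]

lemma single_le_single_diff (a b : ℕ) (ha : ¬ a ≤ 0) :
    ¬ (Finsupp.single (0:Fin 2) a ≤ Finsupp.single 1 b) := by
  rw [Finsupp.single_le_iff]; simpa using ha

lemma single_le_single_diff' (a b : ℕ) (ha : ¬ a ≤ 0) :
    ¬ (Finsupp.single (1:Fin 2) a ≤ Finsupp.single 0 b) := by
  rw [Finsupp.single_le_iff]; simpa using ha

lemma mem_I_coeff (k m : ℕ) (hk : 1 ≤ k) (hm : 1 ≤ m) (p q : ℂ)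
    (h : MvPolynomial (Fin 2) ℂ)
    (hh : h ∈ Ideal.span ({C p * X 0 ^ (2*k) - C q * X 1 ^ (2*m), X 0 * X 1,
        X 0 ^ (2*k+1), X 1 ^ (2*m+1)} : Set (MvPolynomial (Fin 2) ℂ))) :
    (∀ s, s < 2*k → coeff (Finsupp.single 0 s) h = 0) ∧
    (∀ t, 1 ≤ t → t < 2*m → coeff (Finsupp.single 1 t) h = 0) ∧
    q * coeff (Finsupp.single 0 (2*k)) h + p * coeff (Finsupp.single 1 (2*m)) h = 0 := by
  simp only [Ideal.span, Submodule.mem_span_insert, Submodule.mem_span_singleton,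
    smul_eq_mul] at hh
  obtain ⟨f1, _, ⟨f2, _, ⟨f3, _, ⟨f4, rfl⟩, rfl⟩, rfl⟩, rfl⟩ := hh
  have key : ∀ (μ : Fin 2 →₀ ℕ),
      coeff μ (f1 * (C p * X 0 ^ (2*k) - C q * X 1 ^ (2*m)) +
        (f2 * (X 0 * X 1) + (f3 * X 0 ^ (2*k+1) + f4 * X 1 ^ (2*m+1))))
      = p * (if Finsupp.single 0 (2*k) ≤ μ then coeff (μ - Finsupp.single 0 (2*k)) f1 else 0)
      - q * (if Finsupp.single 1 (2*m) ≤ μ then coeff (μ - Finsupp.single 1 (2*m)) f1 else 0)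
      + (if Finsupp.single 0 1 + Finsupp.single 1 1 ≤ μ then
            coeff (μ - (Finsupp.single 0 1 + Finsupp.single 1 1)) f2 else 0)
      + (if Finsupp.single 0 (2*k+1) ≤ μ then coeff (μ - Finsupp.single 0 (2*k+1)) f3 else 0)
      + (if Finsupp.single 1 (2*m+1) ≤ μ then coeff (μ - Finsupp.single 1 (2*m+1)) f4 else 0) := by
    intro μ
    have e1 : f1 * (C p * X 0 ^ (2*k) - C q * X 1 ^ (2*m))
        = C p * (f1 * X 0 ^ (2*k)) - C q * (f1 * X 1 ^ (2*m)) := by ring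
    rw [coeff_add, coeff_add, coeff_add, e1, coeff_sub, coeff_C_mul, coeff_C_mul,
      coeff_mul_Xpow, coeff_mul_Xpow, X0X1_eq, coeff_mul_monomial', coeff_mul_Xpow,
      coeff_mul_Xpow]
    split <;> ring_nf
  refine ⟨?_, ?_, ?_⟩
  · intro s hs
    rw [key,
      if_neg (by rw [single_le_single_same]; omega),
      if_neg (single_le_single_diff' _ _ (by omega)),
      if_neg (not_le_single01 s),
      if_neg (by rw [single_le_single_same]; omega),
      if_neg (single_le_single_diff' _ _ (by omega))]
    ring
  · intro t ht1 ht2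
    rw [key,
      if_neg (single_le_single_diff _ _ (by omega)),
      if_neg (by rw [single_le_single_same]; omega),
      if_neg (not_le_single10 t),
      if_neg (single_le_single_diff _ _ (by omega)),
      if_neg (by rw [single_le_single_same]; omega)]
    ring
  · rw [key, key,
      if_pos le_rfl,
      if_neg (single_le_single_diff' _ _ (by omega)),
      if_neg (not_le_single01 _),
      if_neg (by rw [single_le_single_same]; omega),
      if_neg (single_le_single_diff' _ _ (by omega)),
      if_neg (single_le_single_diff _ _ (by omega)),
      if_pos le_rfl,
      if_neg (not_le_single10 _),
      if_neg (single_le_single_diff _ _ (by omega)),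
      if_neg (by rw [single_le_single_same]; omega)]
    simp
    ring


lemma monomial_eq_prod (d : Fin 3 →₀ ℕ) (a : ℂ) :
    (monomial d a : MvPolynomial (Fin 3) ℂ)
      = C a * X 0 ^ (d 0) * X 1 ^ (d 1) * X 2 ^ (d 2) := by
  rw [monomial_eq, Finsupp.prod_fintype _ _ (fun i => pow_zero _), Fin.prod_univ_three,
    mul_assoc, mul_assoc, mul_assoc]

lemma nf (k m : ℕ) (f : MvPolynomial (Fin 3) ℂ) :
    ∃ g ∈ Ideal.span ({X 2, X 0 ^ (k+1), X 1 ^ (m+1), X 0 * X 1} :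
        Set (MvPolynomial (Fin 3) ℂ)), ∃ u v : ℕ → ℂ,
      f = g + (∑ i ∈ Finset.range (k+1), C (u i) * X 0 ^ i)
            + ∑ j ∈ Finset.range m, C (v j) * X 1 ^ (j+1) := by
  induction f using MvPolynomial.induction_on' with
  | add f f' hf hf' =>
    obtain ⟨g, hg, u, v, rfl⟩ := hf
    obtain ⟨g', hg', u', v', rfl⟩ := hf'
    refine ⟨g + g', add_mem hg hg', u + u', v + v', ?_⟩
    simp only [Pi.add_apply, C_add, add_mul, Finset.sum_add_distrib]
    ring
  | monomial d a =>
    by_cases hz : 1 ≤ d 2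
    · refine ⟨monomial d a, ?_, 0, 0, by simp⟩
      obtain ⟨z', hz'⟩ : ∃ z', d 2 = z' + 1 := ⟨d 2 - 1, by omega⟩
      have : (monomial d a : MvPolynomial (Fin 3) ℂ)
          = (C a * X 0 ^ (d 0) * X 1 ^ (d 1) * X 2 ^ z') * X 2 := by
        rw [monomial_eq_prod, hz', pow_succ]; ring
      rw [this]
      exact Ideal.mul_mem_left _ _ (Ideal.subset_span (by simp))
    by_cases hx : k + 1 ≤ d 0
    · refine ⟨monomial d a, ?_, 0, 0, by simp⟩
      obtain ⟨x', hx'⟩ : ∃ x', d 0 = x' + (k+1) := ⟨d 0 - (k+1), by omega⟩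
      have : (monomial d a : MvPolynomial (Fin 3) ℂ)
          = (C a * X 0 ^ x' * X 1 ^ (d 1) * X 2 ^ (d 2)) * X 0 ^ (k+1) := by
        rw [monomial_eq_prod, hx', pow_add]; ring
      rw [this]
      exact Ideal.mul_mem_left _ _ (Ideal.subset_span (by simp))
    by_cases hy : m + 1 ≤ d 1
    · refine ⟨monomial d a, ?_, 0, 0, by simp⟩
      obtain ⟨y', hy'⟩ : ∃ y', d 1 = y' + (m+1) := ⟨d 1 - (m+1), by omega⟩
      have : (monomial d a : MvPolynomial (Fin 3) ℂ)
          = (C a * X 0 ^ (d 0) * X 1 ^ y' * X 2 ^ (d 2)) * X 1 ^ (m+1) := by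
        rw [monomial_eq_prod, hy', pow_add]; ring
      rw [this]
      exact Ideal.mul_mem_left _ _ (Ideal.subset_span (by simp))
    by_cases hxy : 1 ≤ d 0 ∧ 1 ≤ d 1
    · refine ⟨monomial d a, ?_, 0, 0, by simp⟩
      obtain ⟨x', hx'⟩ : ∃ x', d 0 = x' + 1 := ⟨d 0 - 1, by omega⟩
      obtain ⟨y', hy'⟩ : ∃ y', d 1 = y' + 1 := ⟨d 1 - 1, by omega⟩
      have : (monomial d a : MvPolynomial (Fin 3) ℂ)
          = (C a * X 0 ^ x' * X 1 ^ y' * X 2 ^ (d 2)) * (X 0 * X 1) := by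
        rw [monomial_eq_prod, hx', hy', pow_succ, pow_succ]; ring
      rw [this]
      exact Ideal.mul_mem_left _ _ (Ideal.subset_span (by simp))
    -- now d 2 = 0, d 0 ≤ k, d 1 ≤ m, and not both d 0, d 1 ≥ 1
    by_cases hy0 : d 1 = 0
    · refine ⟨0, zero_mem _, fun i => if i = d 0 then a else 0, 0, ?_⟩
      have h1 : ∑ i ∈ Finset.range (k+1), C (if i = d 0 then a else 0) * X 0 ^ i
          = (C a * X 0 ^ (d 0) : MvPolynomial (Fin 3) ℂ) := by
        rw [Finset.sum_eq_single_of_mem (d 0) (Finset.mem_range.2 (by omega))]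
        · simp
        · intro i _ hi; simp [hi]
      beta_reduce
      rw [h1]
      have hz0 : d 2 = 0 := by omega
      simp [monomial_eq_prod, hy0, hz0]
    · refine ⟨0, zero_mem _, 0, fun j => if j + 1 = d 1 then a else 0, ?_⟩
      have h1 : ∑ j ∈ Finset.range m, C (if j + 1 = d 1 then a else 0) * X 1 ^ (j+1)
          = (C a * X 1 ^ (d 1) : MvPolynomial (Fin 3) ℂ) := by
        rw [Finset.sum_eq_single_of_mem (d 1 - 1) (Finset.mem_range.2 (by omega))]
        · rw [if_pos (by omega), show d 1 - 1 + 1 = d 1 from by omega]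
        · intro j _ hj; rw [if_neg (by omega)]; simp
      beta_reduce
      rw [h1]
      have hz0 : d 2 = 0 := by omega
      have hx0 : d 0 = 0 := by omega
      simp [monomial_eq_prod, hy0, hz0, hx0]


lemma single_ne_01 (a b : ℕ) (hb : b ≠ 0) :
    Finsupp.single (1 : Fin 2) b ≠ Finsupp.single 0 a := by
  intro h
  have := DFunLike.congr_fun h 1
  simp [Finsupp.single_apply] at this
  omega

lemma single_ne_10 (a b : ℕ) (hb : b ≠ 0) :
    Finsupp.single (0 : Fin 2) b ≠ Finsupp.single 1 a := by
  intro h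
  have := DFunLike.congr_fun h 0
  simp [Finsupp.single_apply] at this
  omega

lemma coeffU (k m : ℕ) (u v : ℕ → ℂ) (i₀ : ℕ) (hi : i₀ ≤ k) :
    coeff (Finsupp.single 0 (2*i₀))
      ((∑ i ∈ Finset.range (k+1), C (u i) * X 0 ^ (2*i))
        + ∑ j ∈ Finset.range m, (C (v j) * X 1 ^ (2*j+2) : MvPolynomial (Fin 2) ℂ))
      = u i₀ := by
  classical
  rw [coeff_add, coeff_sum, coeff_sum]
  simp only [coeff_C_mul, coeff_X_pow]
  rw [Finset.sum_eq_single_of_mem i₀ (Finset.mem_range.2 (by omega)),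
    Finset.sum_eq_zero]
  · rw [if_pos rfl]; ring
  · intro j _
    rw [if_neg (single_ne_01 _ _ (by omega))]; ring
  · intro i _ hi'
    rw [if_neg (fun h => hi' (by
      have := DFunLike.congr_fun h 0
      simp [Finsupp.single_apply] at this
      omega))]
    ring

lemma coeffV (k m : ℕ) (u v : ℕ → ℂ) (j₀ : ℕ) (hj : j₀ < m) :
    coeff (Finsupp.single 1 (2*j₀+2))
      ((∑ i ∈ Finset.range (k+1), C (u i) * X 0 ^ (2*i))
        + ∑ j ∈ Finset.range m, (C (v j) * X 1 ^ (2*j+2) : MvPolynomial (Fin 2) ℂ))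
      = v j₀ := by
  classical
  rw [coeff_add, coeff_sum, coeff_sum]
  simp only [coeff_C_mul, coeff_X_pow]
  rw [Finset.sum_eq_zero, Finset.sum_eq_single_of_mem j₀ (Finset.mem_range.2 (by omega))]
  · rw [if_pos rfl]; ring
  · intro j _ hj'
    rw [if_neg (fun h => hj' (by
      have := DFunLike.congr_fun h 1
      simp [Finsupp.single_apply] at this
      omega))]
    ring
  · intro i _
    by_cases hi0 : i = 0
    · subst hi0
      rw [if_neg (by
        intro h
        have := DFunLike.congr_fun h 1
        simp [Finsupp.single_apply] at this)]
      ring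
    · rw [if_neg (single_ne_10 _ _ (by omega))]; ring


lemma sigma_X0 : sigmaHom (X 0) = X 0 ^ 2 := by simp [sigmaHom]
lemma sigma_X1 : sigmaHom (X 1) = X 1 ^ 2 := by simp [sigmaHom]
lemma sigma_X2 : sigmaHom (X 2) = X 0 * X 1 := by simp [sigmaHom]
lemma sigma_C (a : ℂ) : sigmaHom (C a) = C a := by simp [sigmaHom]

lemma sigma_sum (k m : ℕ) (u v : ℕ → ℂ) :
    sigmaHom ((∑ i ∈ Finset.range (k+1), C (u i) * X 0 ^ i)
        + ∑ j ∈ Finset.range m, C (v j) * X 1 ^ (j+1))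
      = (∑ i ∈ Finset.range (k+1), C (u i) * X 0 ^ (2*i))
        + ∑ j ∈ Finset.range m, C (v j) * X 1 ^ (2*j+2) := by
  rw [map_add, map_sum, map_sum]
  congr 1
  · apply Finset.sum_congr rfl
    intro i _
    rw [map_mul, map_pow, sigma_X0, sigma_C, ← pow_mul]
  · apply Finset.sum_congr rfl
    intro j _
    rw [map_mul, map_pow, sigma_X1, sigma_C, ← pow_mul,
      show 2*(j+1) = 2*j+2 from by ring]

/-- For `n ≥ 2`, `1 ≤ k ≤ n-1` and `(p,q) ≠ (0,0)`,
`σ⁻¹(⟨p·x^{2k} - q·y^{2n-2k}, xy, x^{2k+1}, y^{2n-2k+1}⟩)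
  = ⟨p·aᵏ - q·b^{n-k}, c, a^{k+1}, b^{n-k+1}, ab⟩`. -/
theorem stmt18 (n k : ℕ) (hn : 2 ≤ n) (hk1 : 1 ≤ k) (hk2 : k ≤ n - 1)
    (p q : ℂ) (hpq : (p, q) ≠ (0, 0)) :
    Ideal.comap sigmaHom
      (Ideal.span ({C p * X 0 ^ (2 * k) - C q * X 1 ^ (2 * n - 2 * k), X 0 * X 1,
        X 0 ^ (2 * k + 1), X 1 ^ (2 * n - 2 * k + 1)} : Set (MvPolynomial (Fin 2) ℂ))) =
    Ideal.span ({C p * X 0 ^ k - C q * X 1 ^ (n - k), X 2,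
        X 0 ^ (k + 1), X 1 ^ (n - k + 1), X 0 * X 1} : Set (MvPolynomial (Fin 3) ℂ)) := by
  obtain ⟨m, hm1, rfl⟩ : ∃ m, 1 ≤ m ∧ n = k + m := ⟨n - k, by omega, by omega⟩
  rw [show 2 * (k + m) - 2 * k = 2 * m from by omega, show k + m - k = m from by omega]
  have hJ0 : Ideal.span ({X 2, X 0 ^ (k+1), X 1 ^ (m+1), X 0 * X 1} :
      Set (MvPolynomial (Fin 3) ℂ)) ≤ Ideal.comap sigmaHom
      (Ideal.span ({C p * X 0 ^ (2 * k) - C q * X 1 ^ (2 * m), X 0 * X 1,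
        X 0 ^ (2 * k + 1), X 1 ^ (2 * m + 1)} : Set (MvPolynomial (Fin 2) ℂ))) := by
    rw [Ideal.span_le]
    rintro x hx
    simp only [Set.mem_insert_iff, Set.mem_singleton_iff] at hx
    rcases hx with rfl | rfl | rfl | rfl <;> rw [SetLike.mem_coe, Ideal.mem_comap]
    · rw [sigma_X2]
      exact Ideal.subset_span (by simp)
    · rw [map_pow, sigma_X0, ← pow_mul, show 2*(k+1) = (2*k+1)+1 from by ring, pow_succ]
      exact Ideal.mul_mem_right _ _ (Ideal.subset_span (by
        simp only [Set.mem_insert_iff, Set.mem_singleton_iff]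
        right; right; left; rfl))
    · rw [map_pow, sigma_X1, ← pow_mul, show 2*(m+1) = (2*m+1)+1 from by ring, pow_succ]
      exact Ideal.mul_mem_right _ _ (Ideal.subset_span (by
        simp only [Set.mem_insert_iff, Set.mem_singleton_iff]
        right; right; right; rfl))
    · rw [map_mul, sigma_X0, sigma_X1, show (X 0 ^ 2 * X 1 ^ 2 : MvPolynomial (Fin 2) ℂ)
        = (X 0 * X 1) * (X 0 * X 1) from by ring]
      exact Ideal.mul_mem_right _ _ (Ideal.subset_span (by simp))
  apply le_antisymm
  · intro f hf
    rw [Ideal.mem_comap] at hf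
    obtain ⟨g, hg, u, v, rfl⟩ := nf k m f
    have hgmem : sigmaHom g ∈ Ideal.span ({C p * X 0 ^ (2 * k) - C q * X 1 ^ (2 * m),
        X 0 * X 1, X 0 ^ (2 * k + 1), X 1 ^ (2 * m + 1)} : Set (MvPolynomial (Fin 2) ℂ)) :=
      Ideal.mem_comap.1 (hJ0 hg)
    rw [show g + (∑ i ∈ Finset.range (k+1), C (u i) * X 0 ^ i)
          + ∑ j ∈ Finset.range m, C (v j) * X 1 ^ (j+1)
        = g + ((∑ i ∈ Finset.range (k+1), C (u i) * X 0 ^ i)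
          + ∑ j ∈ Finset.range m, C (v j) * X 1 ^ (j+1)) from by ring] at hf ⊢
    rw [map_add, sigma_sum] at hf
    have himg : (∑ i ∈ Finset.range (k+1), C (u i) * X 0 ^ (2*i))
        + ∑ j ∈ Finset.range m, C (v j) * X 1 ^ (2*j+2)
        ∈ Ideal.span ({C p * X 0 ^ (2 * k) - C q * X 1 ^ (2 * m),
          X 0 * X 1, X 0 ^ (2 * k + 1), X 1 ^ (2 * m + 1)} : Set (MvPolynomial (Fin 2) ℂ)) := by
      have := Ideal.sub_mem _ hf hgmem
      simpa using this
    obtain ⟨hA, hB, hC⟩ := mem_I_coeff k m hk1 hm1 p q _ himg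
    have hu : ∀ i, i < k → u i = 0 := fun i hik =>
      (coeffU k m u v i hik.le).symm.trans (hA (2*i) (by omega))
    have hv : ∀ j, j + 1 < m → v j = 0 := fun j hj =>
      (coeffV k m u v j (by omega)).symm.trans (hB (2*j+2) (by omega) (by omega))
    have hrel : q * u k + p * v (m-1) = 0 := by
      have h1 : coeff (Finsupp.single (0 : Fin 2) (2*k)) ((∑ i ∈ Finset.range (k+1), C (u i) * X 0 ^ (2*i))
          + ∑ j ∈ Finset.range m, C (v j) * X 1 ^ (2*j+2)) = u k := coeffU k m u v k le_rfl
      have h2 : coeff (Finsupp.single (1 : Fin 2) (2*m)) ((∑ i ∈ Finset.range (k+1), C (u i) * X 0 ^ (2*i))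
          + ∑ j ∈ Finset.range m, C (v j) * X 1 ^ (2*j+2)) = v (m-1) := by
        have := coeffV k m u v (m-1) (by omega)
        rwa [show 2*(m-1)+2 = 2*m from by omega] at this
      rw [h1, h2] at hC
      exact hC
    have hSu : ∑ i ∈ Finset.range (k+1), C (u i) * X 0 ^ i
        = (C (u k) * X 0 ^ k : MvPolynomial (Fin 3) ℂ) := by
      rw [Finset.sum_range_succ, Finset.sum_eq_zero
        (fun i hi => by rw [hu i (Finset.mem_range.1 hi), C_0, zero_mul]), zero_add]
    have hm' : m - 1 + 1 = m := by omega
    have hSv : ∑ j ∈ Finset.range m, C (v j) * X 1 ^ (j+1)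
        = (C (v (m-1)) * X 1 ^ m : MvPolynomial (Fin 3) ℂ) := by
      conv_lhs => rw [← hm']
      rw [Finset.sum_range_succ, Finset.sum_eq_zero
        (fun j hj => by rw [hv j (by have := Finset.mem_range.1 hj; omega), C_0, zero_mul]),
        zero_add, hm']
    rw [hSu, hSv]
    have hgJ : g ∈ Ideal.span ({C p * X 0 ^ k - C q * X 1 ^ m, X 2,
        X 0 ^ (k + 1), X 1 ^ (m + 1), X 0 * X 1} : Set (MvPolynomial (Fin 3) ℂ)) :=
      Ideal.span_mono (Set.subset_insert _ _) hg
    obtain ⟨l, hl1, hl2⟩ : ∃ l : ℂ, l * p = u k ∧ l * q = -(v (m-1)) := by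
      rcases eq_or_ne p 0 with hp | hp
      · have hq : q ≠ 0 := fun hq0 => hpq (by rw [hp, hq0])
        have huk : u k = 0 := by
          rw [hp, zero_mul, add_zero, mul_eq_zero] at hrel
          exact hrel.resolve_left hq
        exact ⟨-(v (m-1))/q, by rw [hp, mul_zero, huk], by field_simp⟩
      · refine ⟨u k / p, div_mul_cancel₀ _ hp, ?_⟩
        field_simp
        linear_combination hrel
    have key : (C (u k) * X 0 ^ k + C (v (m-1)) * X 1 ^ m : MvPolynomial (Fin 3) ℂ)
        = C l * (C p * X 0 ^ k - C q * X 1 ^ m) := by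
      rw [mul_sub, ← mul_assoc, ← mul_assoc, ← C_mul, ← C_mul, hl1, hl2, C_neg]
      ring
    rw [key]
    exact add_mem hgJ (Ideal.mul_mem_left _ _ (Ideal.subset_span (by simp)))
  · rw [Ideal.span_le]
    rintro x hx
    simp only [Set.mem_insert_iff, Set.mem_singleton_iff] at hx
    rcases hx with rfl | rfl | rfl | rfl | rfl
    · rw [SetLike.mem_coe, Ideal.mem_comap, map_sub, map_mul, map_mul, map_pow, map_pow,
        sigma_X0, sigma_X1, sigma_C, sigma_C, ← pow_mul, ← pow_mul]
      exact Ideal.subset_span (by simp)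
    all_goals exact hJ0 (Ideal.subset_span (by simp))
end

section
/- Fix n ≥ 1, an integer k with 0 ≤ k ≤ n−1, and (p,q) ∈ ℂ² with (p,q) ≠ (0,0). Then the preimage under σ of the ideal ⟨p·x^{2k+1} − q·y^{2n−2k−1}, xy, x^{2k+2}, y^{2n−2k}⟩ of ℂ[x,y] is the ideal ⟨a^{k+1}, b^{n−k}, c, ab⟩ of ℂ[a,b,c]; in particular it does not depend on (p,q). -/
open MvPolynomial

lemma sigmaHom_monomial (s : Fin 3 →₀ ℕ) (c : ℂ) :
    sigmaHom (monomial s c) =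
      monomial (Finsupp.single 0 (2 * s 0 + s 2) + Finsupp.single 1 (2 * s 1 + s 2)) c := by
  rw [sigmaHom, aeval_monomial, Finsupp.prod_fintype _ _ (fun i => pow_zero _),
    Fin.prod_univ_three]
  have h1 : (monomial (Finsupp.single (0 : Fin 2) (2 * s 0 + s 2) +
      Finsupp.single 1 (2 * s 1 + s 2)) c) =
      monomial (Finsupp.single 0 (2 * s 0 + s 2)) c *
        monomial (Finsupp.single 1 (2 * s 1 + s 2)) 1 := by
    rw [monomial_mul, mul_one]
  rw [h1, ← X_pow_eq_monomial, ← C_mul_X_pow_eq_monomial, algebraMap_eq]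
  simp only [Matrix.cons_val_zero, Matrix.cons_val_one, Matrix.head_cons,
    Matrix.cons_val_two, Matrix.tail_cons]
  ring

lemma coeff_sigma_x (f : MvPolynomial (Fin 3) ℂ) (i : ℕ) :
    coeff (Finsupp.single 0 (2 * i) : Fin 2 →₀ ℕ) (sigmaHom f) =
      coeff (Finsupp.single 0 i) f := by
  conv_lhs => rw [f.as_sum, map_sum]
  rw [coeff_sum]
  have key : ∀ v : Fin 3 →₀ ℕ,
      (Finsupp.single (0 : Fin 2) (2 * v 0 + v 2) + Finsupp.single 1 (2 * v 1 + v 2) =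
        Finsupp.single 0 (2 * i)) ↔ v = Finsupp.single 0 i := by
    intro v
    constructor
    · intro h
      rw [Finsupp.ext_iff] at h
      have h0 := h 0
      have h1 := h 1
      simp [Finsupp.single_apply] at h0 h1
      ext j
      fin_cases j <;> simp [Finsupp.single_apply] <;> omega
    · rintro rfl
      simp [Finsupp.single_apply]
  simp_rw [sigmaHom_monomial, coeff_monomial, key]
  rw [Finset.sum_ite_eq' f.support]
  split_ifs with h
  · rfl
  · rw [notMem_support_iff.mp h]

lemma coeff_sigma_y (f : MvPolynomial (Fin 3) ℂ) (j : ℕ) :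
    coeff (Finsupp.single 1 (2 * j) : Fin 2 →₀ ℕ) (sigmaHom f) =
      coeff (Finsupp.single 1 j) f := by
  conv_lhs => rw [f.as_sum, map_sum]
  rw [coeff_sum]
  have key : ∀ v : Fin 3 →₀ ℕ,
      (Finsupp.single (0 : Fin 2) (2 * v 0 + v 2) + Finsupp.single 1 (2 * v 1 + v 2) =
        Finsupp.single 1 (2 * j)) ↔ v = Finsupp.single 1 j := by
    intro v
    constructor
    · intro h
      rw [Finsupp.ext_iff] at h
      have h0 := h 0
      have h1 := h 1
      simp [Finsupp.single_apply] at h0 h1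
      ext j'
      fin_cases j' <;> simp [Finsupp.single_apply] <;> omega
    · rintro rfl
      simp [Finsupp.single_apply]
  simp_rw [sigmaHom_monomial, coeff_monomial, key]
  rw [Finset.sum_ite_eq' f.support]
  split_ifs with h
  · rfl
  · rw [notMem_support_iff.mp h]

/-- For `n ≥ 1`, `0 ≤ k ≤ n-1` and `(p,q) ≠ (0,0)`,
`σ⁻¹(⟨p·x^{2k+1} - q·y^{2n-2k-1}, xy, x^{2k+2}, y^{2n-2k}⟩) = ⟨a^{k+1}, b^{n-k}, c, ab⟩`;
in particular it does not depend on `(p,q)`. -/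
theorem stmt19 (n k : ℕ) (hn : 1 ≤ n) (hk : k ≤ n - 1)
    (p q : ℂ) (hpq : (p, q) ≠ (0, 0)) :
    Ideal.comap sigmaHom
      (Ideal.span ({C p * X 0 ^ (2 * k + 1) - C q * X 1 ^ (2 * n - 2 * k - 1), X 0 * X 1,
        X 0 ^ (2 * k + 2), X 1 ^ (2 * n - 2 * k)} : Set (MvPolynomial (Fin 2) ℂ))) =
    Ideal.span ({X 0 ^ (k + 1), X 1 ^ (n - k), X 2, X 0 * X 1} :
      Set (MvPolynomial (Fin 3) ℂ)) := by
  obtain ⟨d, rfl⟩ : ∃ d, n = k + 1 + d := ⟨n - k - 1, by omega⟩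
  rw [show 2 * (k + 1 + d) - 2 * k - 1 = 2 * d + 1 from by omega,
    show 2 * (k + 1 + d) - 2 * k = 2 * d + 2 from by omega,
    show k + 1 + d - k = d + 1 from by omega]
  have hX01 : (X 0 * X 1 : MvPolynomial (Fin 2) ℂ) =
      monomial (Finsupp.single 0 1 + Finsupp.single 1 1) 1 := by
    rw [X, X, monomial_mul, one_mul]
  apply le_antisymm
  · intro f hf
    rw [Ideal.mem_comap, Ideal.mem_span_insert] at hf
    obtain ⟨u1, z1, hz1, hf⟩ := hf
    rw [Ideal.mem_span_insert] at hz1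
    obtain ⟨u2, z2, hz2, rfl⟩ := hz1
    rw [Ideal.mem_span_insert] at hz2
    obtain ⟨u3, z3, hz3, rfl⟩ := hz2
    rw [Ideal.mem_span_singleton] at hz3
    obtain ⟨u4, rfl⟩ := hz3
    have hcx : ∀ i ≤ k, coeff (Finsupp.single 0 i) f = 0 := by
      intro i hi
      rw [← coeff_sigma_x, hf]
      rw [mul_sub, C_mul_X_pow_eq_monomial, C_mul_X_pow_eq_monomial, hX01,
        X_pow_eq_monomial, X_pow_eq_monomial]
      simp only [coeff_add, coeff_sub, coeff_mul_monomial', coeff_monomial_mul']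
      rw [if_neg, if_neg, if_neg, if_neg, if_neg] <;>
        simp [Finsupp.le_def, Fin.forall_fin_two, Finsupp.single_apply] <;> omega
    have hcy : ∀ j ≤ d, coeff (Finsupp.single 1 j) f = 0 := by
      intro j hj
      rw [← coeff_sigma_y, hf]
      rw [mul_sub, C_mul_X_pow_eq_monomial, C_mul_X_pow_eq_monomial, hX01,
        X_pow_eq_monomial, X_pow_eq_monomial]
      simp only [coeff_add, coeff_sub, coeff_mul_monomial', coeff_monomial_mul']
      rw [if_neg, if_neg, if_neg, if_neg, if_neg] <;>
        simp [Finsupp.le_def, Fin.forall_fin_two, Finsupp.single_apply] <;> omega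
    have himg : ({X 0 ^ (k + 1), X 1 ^ (d + 1), X 2, X 0 * X 1} :
        Set (MvPolynomial (Fin 3) ℂ)) = (fun s => monomial s (1 : ℂ)) ''
          {Finsupp.single 0 (k + 1), Finsupp.single 1 (d + 1), Finsupp.single 2 1,
            Finsupp.single 0 1 + Finsupp.single 1 1} := by
      rw [Set.image_insert_eq, Set.image_insert_eq, Set.image_insert_eq, Set.image_singleton,
        ← X_pow_eq_monomial, ← X_pow_eq_monomial, ← X_pow_eq_monomial, pow_one,
        show monomial (Finsupp.single 0 1 + Finsupp.single 1 1) (1:ℂ) = (X 0 * X 1 : MvPolynomial (Fin 3) ℂ) from by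
          rw [X, X, monomial_mul, one_mul]]
    rw [himg, mem_ideal_span_monomial_image]
    intro m hm
    by_contra hcon
    push_neg at hcon
    simp only [Set.mem_insert_iff, Set.mem_singleton_iff, forall_eq_or_imp, forall_eq] at hcon
    obtain ⟨h1, h2, h3, h4⟩ := hcon
    rw [Finsupp.single_le_iff, not_le] at h1 h2 h3
    have hc : m 0 = 0 ∨ m 1 = 0 := by
      by_contra hc
      push_neg at hc
      apply h4
      rw [Finsupp.le_def]
      intro j
      fin_cases j <;> simp [Finsupp.single_apply] <;> omega
    rw [mem_support_iff] at hm
    apply hm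
    rcases hc with hc | hc
    · have : m = Finsupp.single 1 (m 1) := by
        ext j; fin_cases j <;> simp [Finsupp.single_apply] <;> omega
      rw [this]
      exact hcy _ (by omega)
    · have : m = Finsupp.single 0 (m 0) := by
        ext j; fin_cases j <;> simp [Finsupp.single_apply] <;> omega
      rw [this]
      exact hcx _ (by omega)
  · rw [Ideal.span_le]
    have hmem : (X 0 * X 1 : MvPolynomial (Fin 2) ℂ) ∈
        Ideal.span ({C p * X 0 ^ (2 * k + 1) - C q * X 1 ^ (2 * d + 1), X 0 * X 1,
          X 0 ^ (2 * k + 2), X 1 ^ (2 * d + 2)} : Set (MvPolynomial (Fin 2) ℂ)) :=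
      Ideal.subset_span (by simp)
    rintro x hx
    simp only [Set.mem_insert_iff, Set.mem_singleton_iff] at hx
    rcases hx with rfl | rfl | rfl | rfl <;>
      rw [SetLike.mem_coe, Ideal.mem_comap]
    · rw [map_pow, show sigmaHom (X 0) = X 0 ^ 2 from by simp [sigmaHom],
        ← pow_mul, show 2 * (k + 1) = 2 * k + 2 from by omega]
      exact Ideal.subset_span (by simp)
    · rw [map_pow, show sigmaHom (X 1) = X 1 ^ 2 from by simp [sigmaHom],
        ← pow_mul, show 2 * (d + 1) = 2 * d + 2 from by omega]
      exact Ideal.subset_span (by simp)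
    · rw [show sigmaHom (X 2) = X 0 * X 1 from by simp [sigmaHom]]
      exact hmem
    · rw [map_mul, show sigmaHom (X 0) = X 0 ^ 2 from by simp [sigmaHom],
        show sigmaHom (X 1) = X 1 ^ 2 from by simp [sigmaHom],
        show (X 0 ^ 2 * X 1 ^ 2 : MvPolynomial (Fin 2) ℂ) = (X 0 * X 1) * (X 0 * X 1) from by
          ring]
      exact Ideal.mul_mem_left _ _ hmem
end
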